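/- arXiv:2210.10729 — 7 statements merged into one kernel-verified Lean document; each statement's English description precedes it below -/
import Mathlib

section
/- If f : (a,b) → ℝ is such that for every n×n Hermitian matrix M with spectrum in (a,b) and every Hermitian matrix Q, the matrix-valued function t ↦ f(M+tQ) is twice differentiable at t=0 with positive semidefinite second derivative, then f is matrix convex on n×n Hermitian matrices with spectrum in (a,b): for all such A₀, A₁ and λ ∈ (0,1), f((1-λ)A₀ + λA₁) ≤ (1-λ)f(A₀) + λf(A₁) in the Loewner order. -/
open Matrix ComplexOrder

attribute [local instance] Matrix.normedAddCommGroup Matrix.normedSpace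

/-- Functional calculus for Hermitian matrices (returns 0 on non-Hermitian input). -/
noncomputable def matFun {n : Type*} [Fintype n] [DecidableEq n]
    (f : ℝ → ℝ) (A : Matrix n n ℂ) : Matrix n n ℂ :=
  if hA : A.IsHermitian then
    (Matrix.IsHermitian.eigenvectorUnitary hA : Matrix n n ℂ) *
      Matrix.diagonal (fun i => (f (hA.eigenvalues i) : ℂ)) *
      star (Matrix.IsHermitian.eigenvectorUnitary hA : Matrix n n ℂ)
  else 0


namespace MatConvAux

variable {n : ℕ}


variable {n : ℕ}

lemma isHermitian_real_smul {A : Matrix (Fin n) (Fin n) ℂ} (hA : A.IsHermitian) (c : ℝ) :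
    (c • A).IsHermitian := by
  have : (c • A)ᴴ = star c • Aᴴ := Matrix.conjTranspose_smul c A
  rw [Matrix.IsHermitian, this, star_trivial, hA]

lemma matFun_isHermitian (f : ℝ → ℝ) {A : Matrix (Fin n) (Fin n) ℂ} (hA : A.IsHermitian) :
    (matFun f A).IsHermitian := by
  rw [matFun, dif_pos hA, Matrix.star_eq_conjTranspose]
  have hd : (Matrix.diagonal (fun i => (f (hA.eigenvalues i) : ℂ))).IsHermitian :=
    Matrix.isHermitian_diagonal_iff.mpr fun i => by
      simp [_root_.IsSelfAdjoint, Complex.conj_ofReal]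
  simpa using Matrix.isHermitian_conjTranspose_mul_mul
    ((hA.eigenvectorUnitary : Matrix (Fin n) (Fin n) ℂ))ᴴ hd

lemma posDef_real_smul {A : Matrix (Fin n) (Fin n) ℂ} (hA : A.PosDef) {c : ℝ} (hc : 0 < c) :
    (c • A).PosDef := by
  refine Matrix.PosDef.of_dotProduct_mulVec_pos (isHermitian_real_smul hA.1 c) fun x hx => ?_
  rw [Matrix.smul_mulVec, dotProduct_smul]
  have h1 := hA.dotProduct_mulVec_pos hx
  rw [Complex.real_smul]
  exact mul_pos (Complex.zero_lt_real.mpr hc) h1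

lemma posDef_unitary_conj {U D : Matrix (Fin n) (Fin n) ℂ}
    (hU : U ∈ Matrix.unitaryGroup (Fin n) ℂ) (hD : D.PosDef) : (U * D * star U).PosDef := by
  rw [Matrix.star_eq_conjTranspose]
  have hUunit : IsUnit Uᴴ := by
    refine (Matrix.isUnit_iff_isUnit_det _).mpr (Matrix.isUnit_det_of_right_inverse (B := U) ?_)
    rw [← Matrix.star_eq_conjTranspose]
    exact Matrix.mem_unitaryGroup_iff'.mp hU
  refine Matrix.PosDef.of_dotProduct_mulVec_pos ?_ ?_
  · simpa using Matrix.isHermitian_conjTranspose_mul_mul Uᴴ hD.1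
  · intro x hx
    have hne : Uᴴ *ᵥ x ≠ 0 := by
      intro hcon
      apply hx
      have hinj := (Matrix.mulVec_injective_iff_isUnit.mpr hUunit)
      apply hinj
      rw [hcon, Matrix.mulVec_zero]
    have h2 := hD.dotProduct_mulVec_pos hne
    have : U * D * Uᴴ = (Uᴴ)ᴴ * D * Uᴴ := by rw [Matrix.conjTranspose_conjTranspose]
    rw [this]
    simpa only [Matrix.star_mulVec, Matrix.dotProduct_mulVec, Matrix.vecMul_vecMul] using h2




lemma posDef_sub_of_lt {A : Matrix (Fin n) (Fin n) ℂ} (hA : A.IsHermitian) {a : ℝ}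
    (ha : ∀ i, a < hA.eigenvalues i) : (A - a • 1).PosDef := by
  have key : A - a • (1 : Matrix (Fin n) (Fin n) ℂ) =
      (hA.eigenvectorUnitary : Matrix (Fin n) (Fin n) ℂ) *
        Matrix.diagonal (fun i => ((hA.eigenvalues i - a : ℝ) : ℂ)) *
        star (hA.eigenvectorUnitary : Matrix (Fin n) (Fin n) ℂ) := by
    have h1 : a • (1 : Matrix (Fin n) (Fin n) ℂ) =
        (hA.eigenvectorUnitary : Matrix (Fin n) (Fin n) ℂ) * (a • 1) *
          star (hA.eigenvectorUnitary : Matrix (Fin n) (Fin n) ℂ) := by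
      rw [Matrix.mul_smul, Matrix.smul_mul, mul_one,
        Matrix.mem_unitaryGroup_iff.mp hA.eigenvectorUnitary.2]
    conv_lhs => rw [hA.spectral_theorem, h1, Unitary.conjStarAlgAut_apply]
    rw [← Matrix.sub_mul, ← Matrix.mul_sub]
    congr 2
    ext i j
    rcases eq_or_ne i j with rfl | hij
    · simp [Matrix.sub_apply, Matrix.diagonal_apply_eq, Matrix.one_apply_eq, Matrix.smul_apply,
        Complex.real_smul, Complex.ofReal_sub]
    · simp [Matrix.sub_apply, Matrix.diagonal_apply_ne _ hij, Matrix.one_apply_ne hij]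
  rw [key]
  exact posDef_unitary_conj hA.eigenvectorUnitary.2
    (Matrix.posDef_diagonal_iff.mpr fun i => Complex.zero_lt_real.mpr (by linarith [ha i]))

lemma posDef_smul_sub_of_lt {A : Matrix (Fin n) (Fin n) ℂ} (hA : A.IsHermitian) {b : ℝ}
    (hb : ∀ i, hA.eigenvalues i < b) : (b • 1 - A).PosDef := by
  have key : b • (1 : Matrix (Fin n) (Fin n) ℂ) - A =
      (hA.eigenvectorUnitary : Matrix (Fin n) (Fin n) ℂ) *
        Matrix.diagonal (fun i => ((b - hA.eigenvalues i : ℝ) : ℂ)) *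
        star (hA.eigenvectorUnitary : Matrix (Fin n) (Fin n) ℂ) := by
    have h1 : b • (1 : Matrix (Fin n) (Fin n) ℂ) =
        (hA.eigenvectorUnitary : Matrix (Fin n) (Fin n) ℂ) * (b • 1) *
          star (hA.eigenvectorUnitary : Matrix (Fin n) (Fin n) ℂ) := by
      rw [Matrix.mul_smul, Matrix.smul_mul, mul_one,
        Matrix.mem_unitaryGroup_iff.mp hA.eigenvectorUnitary.2]
    conv_lhs => rw [hA.spectral_theorem, h1, Unitary.conjStarAlgAut_apply]
    rw [← Matrix.sub_mul, ← Matrix.mul_sub]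
    congr 2
    ext i j
    rcases eq_or_ne i j with rfl | hij
    · simp [Matrix.sub_apply, Matrix.diagonal_apply_eq, Matrix.one_apply_eq, Matrix.smul_apply,
        Complex.real_smul, Complex.ofReal_sub]
    · simp [Matrix.sub_apply, Matrix.diagonal_apply_ne _ hij, Matrix.one_apply_ne hij]
  rw [key]
  exact posDef_unitary_conj hA.eigenvectorUnitary.2
    (Matrix.posDef_diagonal_iff.mpr fun i => Complex.zero_lt_real.mpr (by linarith [hb i]))

lemma lt_eigenvalues_of_posDef {A : Matrix (Fin n) (Fin n) ℂ} (hA : A.IsHermitian) {a : ℝ}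
    (h : (A - a • 1).PosDef) (i : Fin n) : a < hA.eigenvalues i := by
  set v : Fin n → ℂ := ⇑(hA.eigenvectorBasis i) with hv
  have hvne : v ≠ 0 := by simpa [hv] using hA.eigenvectorBasis.orthonormal.ne_zero i
  have hnorm : star v ⬝ᵥ v = 1 := by
    have h1 := hA.eigenvectorBasis.orthonormal.1 i
    have h2 : (inner ℂ (hA.eigenvectorBasis i) (hA.eigenvectorBasis i) : ℂ) = star v ⬝ᵥ v :=
      (EuclideanSpace.inner_eq_star_dotProduct _ _).trans (dotProduct_comm _ _)
    rw [inner_self_eq_norm_sq_to_K, h1] at h2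
    simpa using h2.symm
  have h2 := h.re_dotProduct_pos hvne
  have h3 : (A - a • 1) *ᵥ v = A *ᵥ v - a • v := by
    rw [Matrix.sub_mulVec, Matrix.smul_mulVec, Matrix.one_mulVec]
  rw [h3, dotProduct_sub, dotProduct_smul, map_sub, RCLike.smul_re, hnorm] at h2
  have h4 : hA.eigenvalues i = RCLike.re (star v ⬝ᵥ A *ᵥ v) := hA.eigenvalues_eq i
  simp only [RCLike.one_re] at h2
  linarith

lemma eigenvalues_lt_of_posDef {A : Matrix (Fin n) (Fin n) ℂ} (hA : A.IsHermitian) {b : ℝ}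
    (h : (b • 1 - A).PosDef) (i : Fin n) : hA.eigenvalues i < b := by
  set v : Fin n → ℂ := ⇑(hA.eigenvectorBasis i) with hv
  have hvne : v ≠ 0 := by simpa [hv] using hA.eigenvectorBasis.orthonormal.ne_zero i
  have hnorm : star v ⬝ᵥ v = 1 := by
    have h1 := hA.eigenvectorBasis.orthonormal.1 i
    have h2 : (inner ℂ (hA.eigenvectorBasis i) (hA.eigenvectorBasis i) : ℂ) = star v ⬝ᵥ v :=
      (EuclideanSpace.inner_eq_star_dotProduct _ _).trans (dotProduct_comm _ _)
    rw [inner_self_eq_norm_sq_to_K, h1] at h2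
    simpa using h2.symm
  have h2 := h.re_dotProduct_pos hvne
  have h3 : (b • 1 - A) *ᵥ v = b • v - A *ᵥ v := by
    rw [Matrix.sub_mulVec, Matrix.smul_mulVec, Matrix.one_mulVec]
  rw [h3, dotProduct_sub, dotProduct_smul, map_sub, RCLike.smul_re, hnorm] at h2
  have h4 : hA.eigenvalues i = RCLike.re (star v ⬝ᵥ A *ᵥ v) := hA.eigenvalues_eq i
  simp only [RCLike.one_re] at h2
  linarith

/-- The real quadratic-form functional `M ↦ (x⋆ M x).re` as a continuous linear map. -/
noncomputable def qf (x : Fin n → ℂ) : Matrix (Fin n) (Fin n) ℂ →L[ℝ] ℝ :=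
  LinearMap.toContinuousLinearMap
  { toFun := fun M => (star x ⬝ᵥ M *ᵥ x).re
    map_add' := fun M N => by
      simp [Matrix.add_mulVec, dotProduct_add]
    map_smul' := fun c M => by
      simp [Matrix.smul_mulVec, dotProduct_smul, Complex.smul_re] }

lemma qf_apply (x : Fin n → ℂ) (M : Matrix (Fin n) (Fin n) ℂ) :
    qf x M = (star x ⬝ᵥ M *ᵥ x).re := rfl


end MatConvAux

open MatConvAux

/-- The local second derivative test: if for every Hermitian `M` with spectrum in `(a,b)` and
every Hermitian `Q` the map `t ↦ f(M + tQ)` is twice differentiable at `0` with positive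
semidefinite second derivative, then `f` is matrix convex on Hermitian matrices with spectrum
in `(a,b)`. -/
theorem matrix_convexity_of_local_second_derivative_test {n : ℕ} (a b : ℝ) (f : ℝ → ℝ)
    (h : ∀ (M Q : Matrix (Fin n) (Fin n) ℂ) (hM : M.IsHermitian), Q.IsHermitian →
      (∀ i, hM.eigenvalues i ∈ Set.Ioo a b) →
      ∃ (D : ℝ → Matrix (Fin n) (Fin n) ℂ) (D2 : Matrix (Fin n) (Fin n) ℂ),
        (∀ᶠ t in nhds (0 : ℝ), HasDerivAt (fun s : ℝ => matFun f (M + s • Q)) (D t) t) ∧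
        HasDerivAt D D2 0 ∧ D2.PosSemidef) :
    ∀ (A₀ A₁ : Matrix (Fin n) (Fin n) ℂ) (h₀ : A₀.IsHermitian) (h₁ : A₁.IsHermitian),
      (∀ i, h₀.eigenvalues i ∈ Set.Ioo a b) → (∀ i, h₁.eigenvalues i ∈ Set.Ioo a b) →
      ∀ l : ℝ, l ∈ Set.Ioo (0 : ℝ) 1 →
        ((1 - l) • matFun f A₀ + l • matFun f A₁
          - matFun f ((1 - l) • A₀ + l • A₁)).PosSemidef := by
  intro A₀ A₁ h₀ h₁ hs₀ hs₁ l hl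
  set Q : Matrix (Fin n) (Fin n) ℂ := A₁ - A₀ with hQdef
  have hQ : Q.IsHermitian := h₁.sub h₀
  have hMt : ∀ t : ℝ, (A₀ + t • Q).IsHermitian :=
    fun t => h₀.add (isHermitian_real_smul hQ t)
  have hcomb : (1 - l) • A₀ + l • A₁ = A₀ + l • Q := by rw [hQdef]; module
  -- spectrum of the path stays in (a, b)
  have hPD₀a : (A₀ - a • 1).PosDef := posDef_sub_of_lt h₀ fun i => (hs₀ i).1
  have hPD₀b : (b • 1 - A₀).PosDef := posDef_smul_sub_of_lt h₀ fun i => (hs₀ i).2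
  have hPD₁a : (A₁ - a • 1).PosDef := posDef_sub_of_lt h₁ fun i => (hs₁ i).1
  have hPD₁b : (b • 1 - A₁).PosDef := posDef_smul_sub_of_lt h₁ fun i => (hs₁ i).2
  have hspec : ∀ t ∈ Set.Icc (0:ℝ) 1, ∀ i, (hMt t).eigenvalues i ∈ Set.Ioo a b := by
    intro t ht i
    have e1 : A₀ + t • Q - a • (1 : Matrix (Fin n) (Fin n) ℂ)
        = (1 - t) • (A₀ - a • 1) + t • (A₁ - a • 1) := by rw [hQdef]; module
    have e2 : b • (1 : Matrix (Fin n) (Fin n) ℂ) - (A₀ + t • Q)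
        = (1 - t) • (b • 1 - A₀) + t • (b • 1 - A₁) := by rw [hQdef]; module
    have p1 : (A₀ + t • Q - a • (1 : Matrix (Fin n) (Fin n) ℂ)).PosDef := by
      rw [e1]
      rcases eq_or_lt_of_le ht.1 with h0 | h0
      · simpa [← h0] using hPD₀a
      rcases eq_or_lt_of_le ht.2 with h1' | h1'
      · simpa [h1'] using hPD₁a
      · exact (posDef_real_smul hPD₀a (by linarith)).add (posDef_real_smul hPD₁a h0)
    have p2 : (b • (1 : Matrix (Fin n) (Fin n) ℂ) - (A₀ + t • Q)).PosDef := by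
      rw [e2]
      rcases eq_or_lt_of_le ht.1 with h0 | h0
      · simpa [← h0] using hPD₀b
      rcases eq_or_lt_of_le ht.2 with h1' | h1'
      · simpa [h1'] using hPD₁b
      · exact (posDef_real_smul hPD₀b (by linarith)).add (posDef_real_smul hPD₁b h0)
    exact ⟨lt_eigenvalues_of_posDef (hMt t) p1 i, eigenvalues_lt_of_posDef (hMt t) p2 i⟩
  -- the matrix path and, for each vector x, the scalar path
  set F : ℝ → Matrix (Fin n) (Fin n) ℂ := fun t => matFun f (A₀ + t • Q) with hF
  refine Matrix.PosSemidef.of_dotProduct_mulVec_nonneg ?_ ?_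
  · exact ((isHermitian_real_smul (matFun_isHermitian f h₀) _).add
      (isHermitian_real_smul (matFun_isHermitian f h₁) _)).sub
      (matFun_isHermitian f (by rw [hcomb]; exact hMt l))
  intro x
  set φ : ℝ → ℝ := fun t => qf x (F t) with hφ
  -- second derivative data at every point of [0,1]
  have main : ∀ t₀ ∈ Set.Icc (0:ℝ) 1, DifferentiableAt ℝ φ t₀ ∧
      ∃ c : ℝ, HasDerivAt (deriv φ) c t₀ ∧ 0 ≤ c := by
    intro t₀ ht₀
    obtain ⟨D, D2, hD, hD2, hpsd⟩ := h (A₀ + t₀ • Q) Q (hMt t₀) hQ (hspec t₀ ht₀)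
    have harg : ∀ s : ℝ, A₀ + t₀ • Q + s • Q = A₀ + (t₀ + s) • Q := fun s => by module
    have hshift : (fun s : ℝ => matFun f (A₀ + t₀ • Q + s • Q)) = fun s => F (t₀ + s) := by
      funext s
      rw [hF, harg s]
    rw [hshift] at hD
    have hev : ∀ᶠ u in nhds t₀, HasDerivAt F (D (u - t₀)) u := by
      have htend : Filter.Tendsto (fun u : ℝ => u - t₀) (nhds t₀) (nhds 0) := by
        have h7 : Filter.Tendsto (fun u : ℝ => u - t₀) (nhds t₀) (nhds (t₀ - t₀)) :=
          Filter.Tendsto.sub Filter.tendsto_id tendsto_const_nhds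
        simpa using h7
      filter_upwards [htend.eventually hD] with u hu
      have h5 := HasDerivAt.comp_sub_const (f := fun s => F (t₀ + s))
        (f' := D (u - t₀)) u t₀ hu
      simp only [show ∀ v : ℝ, t₀ + (v - t₀) = v from fun v => by ring] at h5
      exact h5
    have hφev : ∀ᶠ u in nhds t₀, HasDerivAt φ (qf x (D (u - t₀))) u := by
      filter_upwards [hev] with u hu
      exact (qf x).hasFDerivAt.comp_hasDerivAt u hu
    have hd1 : DifferentiableAt ℝ φ t₀ := by
      have := hφev.self_of_nhds
      simpa using this.differentiableAt
    have hd3 : HasDerivAt (fun u => qf x (D (u - t₀))) (qf x D2) t₀ := by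
      have hD' : HasDerivAt D D2 (t₀ - t₀) := by simpa using hD2
      have h6 := HasDerivAt.comp_sub_const (f := D) (f' := D2) t₀ t₀ hD'
      exact (qf x).hasFDerivAt.comp_hasDerivAt t₀ h6
    have heq : deriv φ =ᶠ[nhds t₀] fun u => qf x (D (u - t₀)) :=
      hφev.mono fun u hu => hu.deriv
    have hd4 : HasDerivAt (deriv φ) (qf x D2) t₀ := hd3.congr_of_eventuallyEq heq
    refine ⟨hd1, qf x D2, hd4, ?_⟩
    rw [qf_apply]
    exact (Complex.le_def.mp (hpsd.dotProduct_mulVec_nonneg x)).1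
  -- convexity of φ on [0,1]
  have hconv : ConvexOn ℝ (Set.Icc (0:ℝ) 1) φ := by
    apply convexOn_of_deriv2_nonneg (convex_Icc 0 1)
    · intro t ht
      exact ((main t ht).1.continuousAt).continuousWithinAt
    · intro t ht
      rw [interior_Icc] at ht
      exact ((main t (Set.mem_Icc_of_Ioo ht)).1).differentiableWithinAt
    · intro t ht
      rw [interior_Icc] at ht
      obtain ⟨c, hc, _⟩ := (main t (Set.mem_Icc_of_Ioo ht)).2
      exact hc.differentiableAt.differentiableWithinAt
    · intro t ht
      rw [interior_Icc] at ht
      obtain ⟨c, hc, hcpos⟩ := (main t (Set.mem_Icc_of_Ioo ht)).2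
      have : deriv (deriv φ) t = c := hc.deriv
      simpa [Function.iterate_succ, Function.comp, this] using hcpos
  have hkey := hconv.2 (Set.left_mem_Icc.mpr zero_le_one) (Set.right_mem_Icc.mpr zero_le_one)
    (by linarith [hl.2] : (0:ℝ) ≤ 1 - l) (le_of_lt hl.1) (by ring)
  simp only [smul_eq_mul, mul_zero, mul_one, zero_add] at hkey
  -- hkey : φ l ≤ (1 - l) * φ 0 + l * φ 1
  have hφ0 : φ 0 = (star x ⬝ᵥ matFun f A₀ *ᵥ x).re := by
    show (star x ⬝ᵥ matFun f (A₀ + (0:ℝ) • Q) *ᵥ x).re = _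
    rw [show A₀ + (0:ℝ) • Q = A₀ by module]
  have hφ1 : φ 1 = (star x ⬝ᵥ matFun f A₁ *ᵥ x).re := by
    show (star x ⬝ᵥ matFun f (A₀ + (1:ℝ) • Q) *ᵥ x).re = _
    rw [show A₀ + (1:ℝ) • Q = A₁ by rw [hQdef]; module]
  have hφl : φ l = (star x ⬝ᵥ matFun f ((1 - l) • A₀ + l • A₁) *ᵥ x).re := by
    show (star x ⬝ᵥ matFun f (A₀ + l • Q) *ᵥ x).re = _
    rw [hcomb]
  -- now the positivity of the quadratic form
  set M := (1 - l) • matFun f A₀ + l • matFun f A₁ - matFun f ((1 - l) • A₀ + l • A₁) with hM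
  have hMherm : M.IsHermitian :=
    ((isHermitian_real_smul (matFun_isHermitian f h₀) _).add
      (isHermitian_real_smul (matFun_isHermitian f h₁) _)).sub
      (matFun_isHermitian f (by rw [hcomb]; exact hMt l))
  have hz : star (star x ⬝ᵥ M *ᵥ x) = star x ⬝ᵥ M *ᵥ x := by
    conv_lhs => rw [Matrix.star_dotProduct, star_star, Matrix.star_mulVec, hMherm.eq]
    conv_rhs => rw [Matrix.dotProduct_mulVec]
  have hre : (star x ⬝ᵥ M *ᵥ x).re = (1 - l) * φ 0 + l * φ 1 - φ l := by
    rw [hφ0, hφ1, hφl, hM]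
    rw [Matrix.sub_mulVec, Matrix.add_mulVec, Matrix.smul_mulVec, Matrix.smul_mulVec,
      dotProduct_sub, dotProduct_add, dotProduct_smul, dotProduct_smul]
    simp [Complex.sub_re, Complex.add_re, Complex.smul_re]
  rw [Complex.le_def]
  constructor
  · rw [Complex.zero_re, hre]
    linarith
  · have him : (star x ⬝ᵥ M *ᵥ x).im = 0 := by
      have := congrArg Complex.im hz
      simp only [Complex.star_def, Complex.conj_im] at this
      linarith
    simp [him]
end

section
/- For any u ∈ ℝ, the function A ↦ (A - u·I)⁻¹ is matrix convex on Hermitian matrices with spectrum in (u, ∞): for Hermitian A₀, A₁ with all eigenvalues > u and λ ∈ (0,1), ((1-λ)A₀ + λA₁ - uI)⁻¹ ≤ (1-λ)(A₀ - uI)⁻¹ + λ(A₁ - uI)⁻¹ in the Loewner order. -/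
open Matrix ComplexOrder

/-- Nonnegative real scalar multiples of positive semidefinite matrices are positive
semidefinite. -/
lemma aux_smul_posSemidef {n : ℕ} {c : ℝ} (hc : 0 ≤ c) {A : Matrix (Fin n) (Fin n) ℂ}
    (hA : A.PosSemidef) : (c • A).PosSemidef := by
  rw [← algebraMap_smul ℂ c A]
  refine ⟨?_, fun x => ?_⟩
  · have h := hA.1
    simp only [Matrix.IsHermitian, Matrix.conjTranspose_smul, h.eq,
      Complex.coe_algebraMap, Complex.star_def, Complex.conj_ofReal]
  · exact (hA.smul (by simpa using Complex.zero_le_real.mpr hc : (0:ℂ) ≤ algebraMap ℝ ℂ c)).2 x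

/-- Positive real scalar multiples of positive definite matrices are positive definite. -/
lemma aux_smul_posDef {n : ℕ} {c : ℝ} (hc : 0 < c) {A : Matrix (Fin n) (Fin n) ℂ}
    (hA : A.PosDef) : (c • A).PosDef := by
  rw [← algebraMap_smul ℂ c A]
  refine ⟨?_, fun x hx => ?_⟩
  · have h := hA.1
    simp only [Matrix.IsHermitian, Matrix.conjTranspose_smul, h.eq,
      Complex.coe_algebraMap, Complex.star_def, Complex.conj_ofReal]
  · exact (hA.smul (by simpa using Complex.zero_lt_real.mpr hc : (0:ℂ) < algebraMap ℝ ℂ c)).2 hx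

/-- Conjugation of a positive definite matrix by a unitary keeps it positive definite. -/
lemma aux_conj_posDef {n : ℕ} {D U : Matrix (Fin n) (Fin n) ℂ}
    (hD : D.PosDef) (hU : Uᴴ * U = 1) : (U * D * Uᴴ).PosDef := by
  refine ⟨?_, fun x hx => ?_⟩
  · simpa [Matrix.conjTranspose_conjTranspose] using
      Matrix.isHermitian_conjTranspose_mul_mul Uᴴ hD.isHermitian
  · have hUnit : IsUnit Uᴴ := by
      have : Invertible Uᴴ := invertibleOfRightInverse Uᴴ U hU
      exact isUnit_of_invertible Uᴴ
    have hinj : Function.Injective (Uᴴ.mulVec) :=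
      Matrix.mulVec_injective_iff_isUnit.mpr hUnit
    have := hD.conjTranspose_mul_mul_same hinj
    rw [Matrix.conjTranspose_conjTranspose] at this
    exact this.2 hx

/-- If the eigenvalues of a Hermitian matrix `A` all exceed `u`, then `A - u • 1` is
positive definite. -/
lemma aux_sub_smul_one_posDef {n : ℕ} (u : ℝ) {A : Matrix (Fin n) (Fin n) ℂ}
    (hA : A.IsHermitian) (he : ∀ i, u < hA.eigenvalues i) :
    (A - (u : ℂ) • 1).PosDef := by
  set U : Matrix (Fin n) (Fin n) ℂ := (hA.eigenvectorUnitary : Matrix (Fin n) (Fin n) ℂ) with hUdef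
  have hUU : U * Uᴴ = 1 := by
    simpa [Matrix.star_eq_conjTranspose] using
      (Unitary.mul_star_self_of_mem hA.eigenvectorUnitary.2)
  have hUU' : Uᴴ * U = 1 := by
    simpa [Matrix.star_eq_conjTranspose] using
      (Unitary.star_mul_self_of_mem hA.eigenvectorUnitary.2)
  have key : A - (u : ℂ) • 1 =
      U * Matrix.diagonal (fun i => ((hA.eigenvalues i - u : ℝ) : ℂ)) * Uᴴ := by
    have hsp := hA.spectral_theorem
    have h1 : (u : ℂ) • (1 : Matrix (Fin n) (Fin n) ℂ) = U * ((u : ℂ) • 1) * Uᴴ := by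
      rw [Matrix.mul_smul, Matrix.smul_mul, Matrix.mul_one, hUU]
    calc A - (u : ℂ) • 1
        = U * Matrix.diagonal (RCLike.ofReal ∘ hA.eigenvalues) * Uᴴ
          - U * ((u : ℂ) • 1) * Uᴴ := by
          rw [← h1]
          rw [Unitary.conjStarAlgAut_apply, Matrix.star_eq_conjTranspose, ← hUdef] at hsp
          rw [← hsp]
      _ = U * (Matrix.diagonal (RCLike.ofReal ∘ hA.eigenvalues) - (u : ℂ) • 1) * Uᴴ := by
          rw [Matrix.mul_sub, Matrix.sub_mul]
      _ = U * Matrix.diagonal (fun i => ((hA.eigenvalues i - u : ℝ) : ℂ)) * Uᴴ := by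
          congr 2
          rw [Matrix.smul_one_eq_diagonal, Matrix.diagonal_sub]
          funext i
          simp
  rw [key]
  have hdiag : (Matrix.diagonal (fun i => ((hA.eigenvalues i - u : ℝ) : ℂ))).PosDef := by
    rw [Matrix.posDef_diagonal_iff]
    intro i
    simpa using Complex.zero_lt_real.mpr (sub_pos.mpr (he i))
  exact aux_conj_posDef hdiag hUU'

/-- For `u ∈ ℝ`, the map `A ↦ (A - uI)⁻¹` is matrix convex on Hermitian matrices with
spectrum in `(u, ∞)`. -/
theorem resolvent_matrix_convex_above {n : ℕ} (u : ℝ)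
    (A₀ A₁ : Matrix (Fin n) (Fin n) ℂ) (h₀ : A₀.IsHermitian) (h₁ : A₁.IsHermitian)
    (he₀ : ∀ i, u < h₀.eigenvalues i) (he₁ : ∀ i, u < h₁.eigenvalues i)
    (l : ℝ) (hl : l ∈ Set.Ioo (0 : ℝ) 1) :
    ((1 - l) • (A₀ - (u : ℂ) • 1)⁻¹ + l • (A₁ - (u : ℂ) • 1)⁻¹
      - ((1 - l) • A₀ + l • A₁ - (u : ℂ) • 1)⁻¹).PosSemidef := by
  obtain ⟨hl0, hl1⟩ := hl
  set B₀ := A₀ - (u : ℂ) • 1 with hB₀def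
  set B₁ := A₁ - (u : ℂ) • 1 with hB₁def
  have hB₀ : B₀.PosDef := aux_sub_smul_one_posDef u h₀ he₀
  have hB₁ : B₁.PosDef := aux_sub_smul_one_posDef u h₁ he₁
  set M := (1 - l) • B₀ + l • B₁ with hMdef
  have hM : M.PosDef := (aux_smul_posDef (by linarith) hB₀).add (aux_smul_posDef hl0 hB₁)
  have hMarg : (1 - l) • A₀ + l • A₁ - (u : ℂ) • 1 = M := by
    rw [hMdef, hB₀def, hB₁def]
    module
  set S := M⁻¹ with hSdef
  have hS : S.PosDef := hM.inv
  letI := hM.isUnit.invertible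
  have hSM : S * M = 1 := Matrix.inv_mul_of_invertible M
  have key : ∀ (B : Matrix (Fin n) (Fin n) ℂ), B.PosDef →
      (S - B⁻¹) * B * (S - B⁻¹)ᴴ = S * B * S - S - S + B⁻¹ := by
    intro B hB
    letI := hB.isUnit.invertible
    have h1 : B * B⁻¹ = 1 := Matrix.mul_inv_of_invertible B
    have h2 : B⁻¹ * B = 1 := Matrix.inv_mul_of_invertible B
    have hherm : (S - B⁻¹)ᴴ = S - B⁻¹ := by
      rw [Matrix.conjTranspose_sub, hS.isHermitian.eq, hB.isHermitian.inv.eq]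
    rw [hherm]
    have expand : (S - B⁻¹) * B * (S - B⁻¹)
        = S * B * S - S * (B * B⁻¹) - B⁻¹ * B * S + B⁻¹ * B * B⁻¹ := by
      noncomm_ring
    rw [expand, h1, h2, Matrix.mul_one, Matrix.one_mul, Matrix.one_mul]
  have hP₀ := hB₀.posSemidef.mul_mul_conjTranspose_same (S - B₀⁻¹)
  rw [key B₀ hB₀] at hP₀
  have hP₁ := hB₁.posSemidef.mul_mul_conjTranspose_same (S - B₁⁻¹)
  rw [key B₁ hB₁] at hP₁
  have hsum := (aux_smul_posSemidef (by linarith : (0:ℝ) ≤ 1 - l) hP₀).add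
    (aux_smul_posSemidef hl0.le hP₁)
  have hfold : (1 - l) • (S * B₀ * S) + l • (S * B₁ * S) = S := by
    have h3 : S * M * S = S := by rw [hSM, Matrix.one_mul]
    calc (1 - l) • (S * B₀ * S) + l • (S * B₁ * S)
        = S * ((1 - l) • B₀ + l • B₁) * S := by
          rw [Matrix.mul_add, Matrix.add_mul, Matrix.mul_smul, Matrix.smul_mul,
            Matrix.mul_smul, Matrix.smul_mul]
      _ = S := by rw [← hMdef]; exact h3
  rw [hMarg, ← hSdef]
  have heq : (1 - l) • B₀⁻¹ + l • B₁⁻¹ - S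
      = (1 - l) • (S * B₀ * S - S - S + B₀⁻¹) + l • (S * B₁ * S - S - S + B₁⁻¹) := by
    have expand : (1 - l) • (S * B₀ * S - S - S + B₀⁻¹) + l • (S * B₁ * S - S - S + B₁⁻¹)
        = ((1 - l) • (S * B₀ * S) + l • (S * B₁ * S))
          + ((1 - l) • B₀⁻¹ + l • B₁⁻¹) - ((1 - l) • (S + S) + l • (S + S)) := by
      module
    rw [expand, hfold]
    have h4 : (1 - l) • (S + S) + l • (S + S) = S + S := by module
    rw [h4]
    abel
  rw [heq]
  exact hsum
end

section
/- For any u ∈ ℝ, the function A ↦ (u·I - A)⁻¹ is matrix convex on Hermitian matrices with spectrum in (-∞, u). -/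
open Matrix ComplexOrder

lemma posSemidef_real_smul {n : Type*} [Fintype n] {M : Matrix n n ℂ}
    (hM : M.PosSemidef) {c : ℝ} (hc : 0 ≤ c) : (c • M).PosSemidef := by
  refine ⟨?_, fun x => ?_⟩
  · rw [Matrix.IsHermitian, conjTranspose_smul, star_trivial, hM.1.eq]
  · simpa [Finsupp.sum, Finset.mul_sum, mul_assoc, mul_left_comm] using smul_nonneg hc (hM.2 x)

lemma posDef_real_smul {n : Type*} [Fintype n] {M : Matrix n n ℂ}
    (hM : M.PosDef) {c : ℝ} (hc : 0 < c) : (c • M).PosDef := by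
  refine ⟨?_, fun x hx => ?_⟩
  · rw [Matrix.IsHermitian, conjTranspose_smul, star_trivial, hM.1.eq]
  · simpa [Finsupp.sum, Finset.mul_sum, mul_assoc, mul_left_comm] using smul_pos hc (hM.2 hx)

lemma posDef_conjTranspose_mul_mul {n m : Type*} [Fintype n] [Fintype m]
    {A : Matrix n n ℂ} (hA : A.PosDef) (B : Matrix n m ℂ)
    (hB : Function.Injective B.mulVec) : (Bᴴ * A * B).PosDef := by
  exact hA.conjTranspose_mul_mul_same hB

lemma posDef_smul_one_sub {n : ℕ} (u : ℝ) (A : Matrix (Fin n) (Fin n) ℂ)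
    (hA : A.IsHermitian) (he : ∀ i, hA.eigenvalues i < u) :
    ((u : ℂ) • 1 - A).PosDef := by
  set U : Matrix (Fin n) (Fin n) ℂ := (hA.eigenvectorUnitary : Matrix (Fin n) (Fin n) ℂ)
  have hU₁ : U * star U = 1 := Matrix.mem_unitaryGroup_iff.mp hA.eigenvectorUnitary.2
  have hU₂ : star U * U = 1 := Matrix.mem_unitaryGroup_iff'.mp hA.eigenvectorUnitary.2
  have hDiag : (Matrix.diagonal (fun i => ((u - hA.eigenvalues i : ℝ) : ℂ))).PosDef := by
    refine Matrix.posDef_diagonal_iff.mpr fun i => ?_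
    rw [Complex.zero_lt_real]
    linarith [he i]
  have key : (u : ℂ) • 1 - A
      = U * Matrix.diagonal (fun i => ((u - hA.eigenvalues i : ℝ) : ℂ)) * star U := by
    have hd : Matrix.diagonal (fun i => ((u - hA.eigenvalues i : ℝ) : ℂ))
        = (u : ℂ) • 1 - Matrix.diagonal (RCLike.ofReal ∘ hA.eigenvalues) := by
      ext i j
      by_cases h : i = j <;>
        simp [Matrix.diagonal, Matrix.one_apply, h, Complex.ofReal_sub]
    rw [hd]
    simp only [Matrix.mul_sub, Matrix.sub_mul, Matrix.mul_smul, Matrix.smul_mul,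
      Matrix.mul_one]
    rw [hU₁]
    conv_lhs => rw [hA.spectral_theorem, Unitary.conjStarAlgAut_apply]
  rw [key]
  have hUnit : IsUnit (star U) := ⟨⟨star U, U, hU₂, hU₁⟩, rfl⟩
  have hinj : Function.Injective (star U).mulVec :=
    Matrix.mulVec_injective_iff_isUnit.mpr hUnit
  have := posDef_conjTranspose_mul_mul hDiag (star U) hinj
  simpa [Matrix.star_eq_conjTranspose] using this

/-- For `u ∈ ℝ`, the map `A ↦ (uI - A)⁻¹` is matrix convex on Hermitian matrices with
spectrum in `(-∞, u)`. -/
theorem resolvent_matrix_convex_below {n : ℕ} (u : ℝ)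
    (A₀ A₁ : Matrix (Fin n) (Fin n) ℂ) (h₀ : A₀.IsHermitian) (h₁ : A₁.IsHermitian)
    (he₀ : ∀ i, h₀.eigenvalues i < u) (he₁ : ∀ i, h₁.eigenvalues i < u)
    (l : ℝ) (hl : l ∈ Set.Ioo (0 : ℝ) 1) :
    ((1 - l) • ((u : ℂ) • 1 - A₀)⁻¹ + l • ((u : ℂ) • 1 - A₁)⁻¹
      - ((u : ℂ) • 1 - ((1 - l) • A₀ + l • A₁))⁻¹).PosSemidef := by
  obtain ⟨hl0, hl1⟩ := hl
  have hl0' : (0:ℝ) ≤ 1 - l := by linarith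
  set B₀ : Matrix (Fin n) (Fin n) ℂ := (u : ℂ) • 1 - A₀ with hB₀def
  set B₁ : Matrix (Fin n) (Fin n) ℂ := (u : ℂ) • 1 - A₁ with hB₁def
  set C : Matrix (Fin n) (Fin n) ℂ := (u : ℂ) • 1 - ((1 - l) • A₀ + l • A₁) with hCdef
  have hB₀ : B₀.PosDef := posDef_smul_one_sub u A₀ h₀ he₀
  have hB₁ : B₁.PosDef := posDef_smul_one_sub u A₁ h₁ he₁
  have hCeq : (1 - l) • B₀ + l • B₁ = C := by
    rw [hB₀def, hB₁def, hCdef]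
    module
  have hC : C.PosDef := by
    rw [← hCeq]
    exact (posDef_real_smul hB₀ (by linarith)).add (posDef_real_smul hB₁ hl0)
  have := hB₀.isUnit.invertible
  have := hB₁.isUnit.invertible
  have := hC.isUnit.invertible
  -- block matrices
  have hK₀ : (Matrix.fromBlocks B₀ 1 1 B₀⁻¹).PosSemidef := by
    have := (Matrix.PosDef.fromBlocks₁₁ (1 : Matrix (Fin n) (Fin n) ℂ) B₀⁻¹ hB₀).mpr
      (by simpa using Matrix.PosSemidef.zero (n := Fin n) (R := ℂ))
    simpa using this
  have hK₁ : (Matrix.fromBlocks B₁ 1 1 B₁⁻¹).PosSemidef := by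
    have := (Matrix.PosDef.fromBlocks₁₁ (1 : Matrix (Fin n) (Fin n) ℂ) B₁⁻¹ hB₁).mpr
      (by simpa using Matrix.PosSemidef.zero (n := Fin n) (R := ℂ))
    simpa using this
  set N : Matrix (Fin n) (Fin n) ℂ := (1 - l) • B₀⁻¹ + l • B₁⁻¹ with hNdef
  have hK : (Matrix.fromBlocks C 1 1 N).PosSemidef := by
    have hsum : (1 - l) • (Matrix.fromBlocks B₀ 1 1 B₀⁻¹) + l • (Matrix.fromBlocks B₁ 1 1 B₁⁻¹)
        = Matrix.fromBlocks C 1 1 N := by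
      have hone : (1 - l) • (1 : Matrix (Fin n) (Fin n) ℂ) + l • 1 = 1 := by module
      rw [Matrix.fromBlocks_smul, Matrix.fromBlocks_smul, Matrix.fromBlocks_add, hCeq, hone]
    rw [← hsum]
    exact (posSemidef_real_smul hK₀ hl0').add (posSemidef_real_smul hK₁ (le_of_lt hl0))
  have hfin := (Matrix.PosDef.fromBlocks₁₁ (1 : Matrix (Fin n) (Fin n) ℂ) N hC).mp
    (by simpa using hK)
  simpa [hNdef] using hfin
end

section
/- Parallel sum concavity (Anderson–Duffin): the map (A, B) ↦ (A⁻¹ + B⁻¹)⁻¹ is jointly concave on pairs of positive definite Hermitian matrices: for positive definite A₀, A₁, B₀, B₁ and λ ∈ (0,1), ((A_λ)⁻¹ + (B_λ)⁻¹)⁻¹ ≥ (1-λ)(A₀⁻¹+B₀⁻¹)⁻¹ + λ(A₁⁻¹+B₁⁻¹)⁻¹, where A_λ = (1-λ)A₀ + λA₁ and B_λ = (1-λ)B₀ + λB₁. -/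
open Matrix ComplexOrder

lemma ring_key {R : Type*} [Ring R] (A B X Y T : R)
    (hX : X * A = 1) (hY : Y * B = 1) (hT1 : (A + B) * T = 1) :
    (X + Y) * (A - A * T * A) = 1 := by
  have hAT : A * T = 1 - B * T :=
    eq_sub_of_add_eq (by rw [← add_mul, hT1])
  have e1 : A * T * A = A - B * (T * A) := by
    rw [hAT, sub_mul, one_mul, mul_assoc]
  have e2 : X * (A * T * A) = T * A := by
    rw [← mul_assoc, ← mul_assoc, hX, one_mul]
  have e3 : Y * (A * T * A) = Y * A - T * A := by
    rw [e1, mul_sub, ← mul_assoc, hY, one_mul]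
  calc (X + Y) * (A - A * T * A)
      = X * A + Y * A - X * (A * T * A) - Y * (A * T * A) := by noncomm_ring
    _ = 1 + Y * A - T * A - (Y * A - T * A) := by rw [hX, e2, e3]
    _ = 1 := by abel

lemma key_identity {R : Type*} [Ring R] [StarRing R] (A B C T : R)
    (hA : star A = A) (hT : star T = T)
    (h1 : (A + B) * T = 1) (h2 : T * (A + B) = 1) :
    star (1 - C) * A * (1 - C) + star C * B * C - (A - A * T * A)
      = star (C - T * A) * ((A + B) * (C - T * A)) := by
  simp only [star_sub, star_one, StarMul.star_mul, hA, hT]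
  have e1 : (A + B) * (T * A) = A := by rw [← mul_assoc, h1, one_mul]
  have e2 : (A + B) * (C - T * A) = (A + B) * C - A := by rw [mul_sub, e1]
  rw [e2]
  have e3 : (star C - A * T) * ((A + B) * C - A)
      = star C * ((A + B) * C) - star C * A - A * (T * ((A + B) * C)) + A * T * A := by
    noncomm_ring
  rw [e3, ← mul_assoc T, h2, one_mul]
  noncomm_ring

lemma smul_posSemidef {n : ℕ} {M : Matrix (Fin n) (Fin n) ℂ} (hM : M.PosSemidef)
    {r : ℝ} (hr : 0 ≤ r) : (r • M).PosSemidef := by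
  refine .of_dotProduct_mulVec_nonneg ?_ ?_
  · have h1 := hM.1
    unfold Matrix.IsHermitian at *
    ext i j
    simp [Matrix.conjTranspose_apply, ← congrFun (congrFun h1 i) j,
      Matrix.conjTranspose_apply, Complex.real_smul, _root_.map_mul]
  · intro x
    rw [Matrix.smul_mulVec, dotProduct_smul]
    have := hM.dotProduct_mulVec_nonneg x
    rw [Complex.real_smul]
    exact mul_nonneg (by exact_mod_cast Complex.zero_le_real.mpr hr) this

lemma smul_posDef {n : ℕ} {M : Matrix (Fin n) (Fin n) ℂ} (hM : M.PosDef)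
    {r : ℝ} (hr : 0 < r) : (r • M).PosDef := by
  refine .of_dotProduct_mulVec_pos (smul_posSemidef hM.posSemidef hr.le).1 fun x hx => ?_
  rw [Matrix.smul_mulVec, dotProduct_smul, Complex.real_smul]
  exact mul_pos (by exact_mod_cast Complex.zero_lt_real.mpr hr) (hM.dotProduct_mulVec_pos hx)

-- parallel sum formula
lemma par_sum_eq {n : ℕ} {A B : Matrix (Fin n) (Fin n) ℂ} (hA : A.PosDef) (hB : B.PosDef) :
    (A⁻¹ + B⁻¹)⁻¹ = A - A * (A + B)⁻¹ * A := by
  have hS : (A + B).PosDef := hA.add hB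
  refine Matrix.inv_eq_right_inv (ring_key A B A⁻¹ B⁻¹ (A + B)⁻¹ ?_ ?_ ?_)
  · exact Matrix.nonsing_inv_mul A ((Matrix.isUnit_iff_isUnit_det A).mp hA.isUnit)
  · exact Matrix.nonsing_inv_mul B ((Matrix.isUnit_iff_isUnit_det B).mp hB.isUnit)
  · exact Matrix.mul_nonsing_inv _ ((Matrix.isUnit_iff_isUnit_det _).mp hS.isUnit)

lemma par_bound {n : ℕ} {A B : Matrix (Fin n) (Fin n) ℂ} (hA : A.PosDef) (hB : B.PosDef)
    (C : Matrix (Fin n) (Fin n) ℂ) :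
    ((1 - C)ᴴ * A * (1 - C) + Cᴴ * B * C - (A⁻¹ + B⁻¹)⁻¹).PosSemidef := by
  have hS : (A + B).PosDef := hA.add hB
  have hdet : IsUnit (A + B).det := (Matrix.isUnit_iff_isUnit_det _).mp hS.isUnit
  have hkey := key_identity A B C (A + B)⁻¹
    hA.isHermitian (by simpa [Matrix.star_eq_conjTranspose] using hS.isHermitian.inv.eq)
    (Matrix.mul_nonsing_inv _ hdet) (Matrix.nonsing_inv_mul _ hdet)
  rw [par_sum_eq hA hB]
  simp only [Matrix.star_eq_conjTranspose] at hkey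
  rw [hkey, ← Matrix.mul_assoc]
  exact hS.posSemidef.conjTranspose_mul_mul_same _

/-- Anderson–Duffin: the parallel sum `(A, B) ↦ (A⁻¹ + B⁻¹)⁻¹` is jointly concave on pairs of
positive definite Hermitian matrices, in the Loewner order. -/
theorem parallel_sum_jointly_concave {n : ℕ}
    (A₀ A₁ B₀ B₁ : Matrix (Fin n) (Fin n) ℂ)
    (hA₀ : A₀.PosDef) (hA₁ : A₁.PosDef) (hB₀ : B₀.PosDef) (hB₁ : B₁.PosDef)
    (l : ℝ) (hl : l ∈ Set.Ioo (0 : ℝ) 1) :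
    ((((1 - l) • A₀ + l • A₁)⁻¹ + ((1 - l) • B₀ + l • B₁)⁻¹)⁻¹
      - ((1 - l) • (A₀⁻¹ + B₀⁻¹)⁻¹ + l • (A₁⁻¹ + B₁⁻¹)⁻¹)).PosSemidef := by
  obtain ⟨hl0, hl1⟩ := hl
  set Al := (1 - l) • A₀ + l • A₁ with hAldef
  set Bl := (1 - l) • B₀ + l • B₁ with hBldef
  have hAl : Al.PosDef := (smul_posDef hA₀ (by linarith)).add (smul_posDef hA₁ hl0)
  have hBl : Bl.PosDef := (smul_posDef hB₀ (by linarith)).add (smul_posDef hB₁ hl0)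
  have hSl : (Al + Bl).PosDef := hAl.add hBl
  have hdet : IsUnit (Al + Bl).det := (Matrix.isUnit_iff_isUnit_det _).mp hSl.isUnit
  set C : Matrix (Fin n) (Fin n) ℂ := (Al + Bl)⁻¹ * Al with hCdef
  -- the parallel sum at λ is exactly the quadratic expression at C
  have hkey := key_identity Al Bl C (Al + Bl)⁻¹
    hAl.isHermitian (by simpa [Matrix.star_eq_conjTranspose] using hSl.isHermitian.inv.eq)
    (Matrix.mul_nonsing_inv _ hdet) (Matrix.nonsing_inv_mul _ hdet)
  have hCC : C - (Al + Bl)⁻¹ * Al = 0 := sub_self _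
  rw [hCC] at hkey
  simp only [star_zero, Matrix.mul_zero, Matrix.zero_mul] at hkey
  have hPl : (Al⁻¹ + Bl⁻¹)⁻¹ = (1 - C)ᴴ * Al * (1 - C) + Cᴴ * Bl * C := by
    rw [par_sum_eq hAl hBl]
    have := sub_eq_zero.mp hkey
    simp only [Matrix.star_eq_conjTranspose] at this
    exact this.symm
  -- decompose the difference as a convex combination of PSD matrices
  have hdecomp : (Al⁻¹ + Bl⁻¹)⁻¹ - ((1 - l) • (A₀⁻¹ + B₀⁻¹)⁻¹ + l • (A₁⁻¹ + B₁⁻¹)⁻¹)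
      = (1 - l) • ((1 - C)ᴴ * A₀ * (1 - C) + Cᴴ * B₀ * C - (A₀⁻¹ + B₀⁻¹)⁻¹)
        + l • ((1 - C)ᴴ * A₁ * (1 - C) + Cᴴ * B₁ * C - (A₁⁻¹ + B₁⁻¹)⁻¹) := by
    rw [hPl, hAldef, hBldef]
    simp only [smul_sub, smul_add, Matrix.mul_add, Matrix.add_mul,
      Matrix.mul_smul, Matrix.smul_mul]
    module
  rw [hdecomp]
  exact (smul_posSemidef (par_bound hA₀ hB₀ C) (by linarith)).add
    (smul_posSemidef (par_bound hA₁ hB₁ C) hl0.le)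
end

section
/- Joint concavity of the k-fold parallel sum: for any k ≥ 1, the map (A₁, …, A_k) ↦ (A₁⁻¹ + ⋯ + A_k⁻¹)⁻¹ is jointly concave on k-tuples of positive definite Hermitian n×n matrices, in the Loewner order. -/
open Matrix ComplexOrder Finset

section Aux

variable {n k : ℕ}

private lemma sum_mulVec' (M : Fin k → Matrix (Fin n) (Fin n) ℂ) (x : Fin n → ℂ) :
    (∑ j, M j) *ᵥ x = ∑ j, M j *ᵥ x := by
  ext i
  simp [Matrix.mulVec, dotProduct, Matrix.sum_apply, Finset.sum_mul]
  rw [Finset.sum_comm]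

private lemma dotProduct_sum' (u : Fin n → ℂ) (v : Fin k → (Fin n → ℂ)) :
    u ⬝ᵥ (∑ j, v j) = ∑ j, u ⬝ᵥ v j := by
  simp [dotProduct, Finset.mul_sum, Finset.sum_apply]
  rw [Finset.sum_comm]

private lemma sum_dotProduct' (u : Fin n → ℂ) (v : Fin k → (Fin n → ℂ)) :
    (∑ j, v j) ⬝ᵥ u = ∑ j, v j ⬝ᵥ u := by
  simp [dotProduct, Finset.sum_mul, Finset.sum_apply]
  rw [Finset.sum_comm]

private lemma smul_posDef_s7 {c : ℝ} (hc : 0 < c) {A : Matrix (Fin n) (Fin n) ℂ}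
    (hA : A.PosDef) : (c • A).PosDef := by
  refine posDef_iff_dotProduct_mulVec.mpr ⟨?_, fun x hx => ?_⟩
  · have : (c • A)ᴴ = star c • Aᴴ := Matrix.conjTranspose_smul c A
    rw [Matrix.IsHermitian, this, star_trivial, hA.isHermitian.eq]
  · have h1 : (c • A) *ᵥ x = c • (A *ᵥ x) := smul_mulVec c A x
    have h2 : (0:ℂ) < star x ⬝ᵥ (A *ᵥ x) := hA.dotProduct_mulVec_pos hx
    have hc' : (0:ℂ) < (c:ℂ) := by exact_mod_cast hc
    rw [h1, dotProduct_smul, Complex.real_smul]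
    exact mul_pos hc' h2

private lemma posDef_sum (hk : 1 ≤ k) (A : Fin k → Matrix (Fin n) (Fin n) ℂ)
    (hA : ∀ j, (A j).PosDef) : (∑ j, A j).PosDef := by
  refine posDef_iff_dotProduct_mulVec.mpr ⟨?_, fun x hx => ?_⟩
  · rw [Matrix.IsHermitian, Matrix.conjTranspose_sum]
    exact Finset.sum_congr rfl fun j _ => (hA j).isHermitian.eq
  · rw [sum_mulVec', dotProduct_sum']
    exact Finset.sum_pos' (fun j _ => (hA j).posSemidef.dotProduct_mulVec_nonneg x)
      ⟨⟨0, hk⟩, Finset.mem_univ _, (hA _).dotProduct_mulVec_pos hx⟩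

/-- The variational (minimum) property of the parallel sum. -/
private lemma key (hk : 1 ≤ k) (A : Fin k → Matrix (Fin n) (Fin n) ℂ)
    (hA : ∀ j, (A j).PosDef) (y : Fin k → (Fin n → ℂ)) (x : Fin n → ℂ)
    (hx : ∑ j, y j = x) :
    star x ⬝ᵥ ((∑ j, (A j)⁻¹)⁻¹ *ᵥ x) ≤ ∑ j, star (y j) ⬝ᵥ (A j *ᵥ y j) := by
  set S : Matrix (Fin n) (Fin n) ℂ := ∑ j, (A j)⁻¹ with hSdef
  have hSpd : S.PosDef := posDef_sum hk _ fun j => (hA j).inv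
  set z : Fin n → ℂ := S⁻¹ *ᵥ x with hz
  set u : Fin k → (Fin n → ℂ) := fun j => (A j)⁻¹ *ᵥ z with hu
  have hAu : ∀ j, A j *ᵥ u j = z := by
    intro j
    rw [hu, Matrix.mulVec_mulVec, Matrix.mul_nonsing_inv _ ((hA j).det_pos.ne').isUnit]
    simp
  have hsumu : ∑ j, u j = x := by
    have : ∑ j, u j = S *ᵥ z := (sum_mulVec' (fun j => (A j)⁻¹) z).symm
    rw [this, hz, Matrix.mulVec_mulVec, Matrix.mul_nonsing_inv _ hSpd.det_pos.ne'.isUnit,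
      Matrix.one_mulVec]
  have hzx : star z ⬝ᵥ x = star x ⬝ᵥ z := by
    rw [hz, Matrix.star_mulVec, hSpd.isHermitian.inv.eq, ← Matrix.dotProduct_mulVec]
  have hterm : ∀ j, star (y j - u j) ⬝ᵥ (A j *ᵥ (y j - u j))
      = star (y j) ⬝ᵥ (A j *ᵥ y j) - star (y j) ⬝ᵥ z - star z ⬝ᵥ y j + star (u j) ⬝ᵥ z := by
    intro j
    have h1 : A j *ᵥ (y j - u j) = A j *ᵥ y j - z := by rw [Matrix.mulVec_sub, hAu j]
    have h2 : star (u j) ⬝ᵥ (A j *ᵥ y j) = star z ⬝ᵥ y j := by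
      rw [Matrix.dotProduct_mulVec]
      have : star (u j) ᵥ* A j = star z := by
        conv_lhs => rw [← (hA j).isHermitian.eq]
        rw [← Matrix.star_mulVec, hAu j]
      rw [this]
    rw [h1, star_sub, sub_dotProduct, dotProduct_sub, dotProduct_sub, h2]
    ring
  have hsum : ∑ j, star (y j - u j) ⬝ᵥ (A j *ᵥ (y j - u j))
      = (∑ j, star (y j) ⬝ᵥ (A j *ᵥ y j)) - star x ⬝ᵥ (S⁻¹ *ᵥ x) := by
    rw [Finset.sum_congr rfl fun j _ => hterm j]
    rw [Finset.sum_add_distrib, Finset.sum_sub_distrib, Finset.sum_sub_distrib]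
    have e1 : ∑ j, star (y j) ⬝ᵥ z = star x ⬝ᵥ z := by
      rw [← sum_dotProduct', ← star_sum, hx]
    have e2 : ∑ j, star z ⬝ᵥ y j = star z ⬝ᵥ x := by
      rw [← dotProduct_sum', hx]
    have e3 : ∑ j, star (u j) ⬝ᵥ z = star x ⬝ᵥ z := by
      rw [← sum_dotProduct', ← star_sum, hsumu]
    rw [e1, e2, e3, hzx, ← hz]
    ring
  have hnn : (0:ℂ) ≤ ∑ j, star (y j - u j) ⬝ᵥ (A j *ᵥ (y j - u j)) :=
    Finset.sum_nonneg fun j _ => (hA j).posSemidef.dotProduct_mulVec_nonneg _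
  rw [hsum] at hnn
  exact sub_nonneg.mp hnn

end Aux

/-- Joint concavity of the `k`-fold parallel sum `(A₁, …, A_k) ↦ (A₁⁻¹ + ⋯ + A_k⁻¹)⁻¹` on
`k`-tuples of positive definite Hermitian matrices, in the Loewner order. -/
theorem parallel_sum_k_jointly_concave {n k : ℕ} (hk : 1 ≤ k)
    (A₀ A₁ : Fin k → Matrix (Fin n) (Fin n) ℂ)
    (h₀ : ∀ j, (A₀ j).PosDef) (h₁ : ∀ j, (A₁ j).PosDef)
    (l : ℝ) (hl : l ∈ Set.Ioo (0 : ℝ) 1) :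
    ((∑ j, ((1 - l) • A₀ j + l • A₁ j)⁻¹)⁻¹
      - ((1 - l) • (∑ j, (A₀ j)⁻¹)⁻¹ + l • (∑ j, (A₁ j)⁻¹)⁻¹)).PosSemidef := by
  obtain ⟨hl0, hl1⟩ := hl
  have hl1' : (0:ℝ) < 1 - l := by linarith
  set C : Fin k → Matrix (Fin n) (Fin n) ℂ := fun j => (1 - l) • A₀ j + l • A₁ j with hC
  have hCpd : ∀ j, (C j).PosDef := fun j =>
    (smul_posDef_s7 hl1' (h₀ j)).add (smul_posDef_s7 hl0 (h₁ j))
  have hSC : (∑ j, (C j)⁻¹).PosDef := posDef_sum hk _ fun j => (hCpd j).inv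
  have hT : ((∑ j, (C j)⁻¹)⁻¹).PosDef := hSC.inv
  have hP : ((∑ j, (A₀ j)⁻¹)⁻¹).PosDef := (posDef_sum hk _ fun j => (h₀ j).inv).inv
  have hQ : ((∑ j, (A₁ j)⁻¹)⁻¹).PosDef := (posDef_sum hk _ fun j => (h₁ j).inv).inv
  refine posSemidef_iff_dotProduct_mulVec.mpr ⟨hT.isHermitian.sub ((smul_posDef_s7 hl1' hP).isHermitian.add
    (smul_posDef_s7 hl0 hQ).isHermitian), fun x => ?_⟩
  set w : Fin n → ℂ := (∑ j, (C j)⁻¹)⁻¹ *ᵥ x with hw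
  set y : Fin k → Fin n → ℂ := fun j => (C j)⁻¹ *ᵥ w with hy
  have hyx : ∑ j, y j = x := by
    have : ∑ j, y j = (∑ j, (C j)⁻¹) *ᵥ w := (sum_mulVec' (fun j => (C j)⁻¹) w).symm
    rw [this, hw, Matrix.mulVec_mulVec, Matrix.mul_nonsing_inv _ hSC.det_pos.ne'.isUnit,
      Matrix.one_mulVec]
  have hCy : ∀ j, C j *ᵥ y j = w := by
    intro j
    rw [hy]
    simp only
    rw [Matrix.mulVec_mulVec, Matrix.mul_nonsing_inv _ (hCpd j).det_pos.ne'.isUnit,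
      Matrix.one_mulVec]
  have hTx : star x ⬝ᵥ ((∑ j, (C j)⁻¹)⁻¹ *ᵥ x) = ∑ j, star (y j) ⬝ᵥ (C j *ᵥ y j) := by
    simp_rw [hCy]
    rw [← sum_dotProduct', ← star_sum, hyx, ← hw]
  have hsplit : ∀ j, star (y j) ⬝ᵥ (C j *ᵥ y j)
      = ((1 - l : ℝ) : ℂ) * (star (y j) ⬝ᵥ (A₀ j *ᵥ y j))
        + ((l : ℝ) : ℂ) * (star (y j) ⬝ᵥ (A₁ j *ᵥ y j)) := by
    intro j
    have : C j = (1 - l) • A₀ j + l • A₁ j := rfl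
    rw [this, Matrix.add_mulVec, smul_mulVec, smul_mulVec, dotProduct_add,
      dotProduct_smul, dotProduct_smul, Complex.real_smul, Complex.real_smul]
  have h₀' := key hk A₀ h₀ y x hyx
  have h₁' := key hk A₁ h₁ y x hyx
  have hc0 : (0:ℂ) ≤ ((1 - l : ℝ) : ℂ) := by exact_mod_cast hl1'.le
  have hc1 : (0:ℂ) ≤ ((l : ℝ) : ℂ) := by exact_mod_cast hl0.le
  rw [Matrix.sub_mulVec, dotProduct_sub, Matrix.add_mulVec, smul_mulVec,
    smul_mulVec, dotProduct_add, dotProduct_smul, dotProduct_smul,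
    Complex.real_smul, Complex.real_smul, sub_nonneg, hTx]
  calc ((1 - l : ℝ) : ℂ) * (star x ⬝ᵥ ((∑ j, (A₀ j)⁻¹)⁻¹ *ᵥ x))
        + ((l : ℝ) : ℂ) * (star x ⬝ᵥ ((∑ j, (A₁ j)⁻¹)⁻¹ *ᵥ x))
      ≤ ((1 - l : ℝ) : ℂ) * (∑ j, star (y j) ⬝ᵥ (A₀ j *ᵥ y j))
        + ((l : ℝ) : ℂ) * (∑ j, star (y j) ⬝ᵥ (A₁ j *ᵥ y j)) :=
        add_le_add (mul_le_mul_of_nonneg_left h₀' hc0) (mul_le_mul_of_nonneg_left h₁' hc1)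
    _ = ∑ j, star (y j) ⬝ᵥ (C j *ᵥ y j) := by
        rw [Finset.mul_sum, Finset.mul_sum, ← Finset.sum_add_distrib]
        exact Finset.sum_congr rfl fun j _ => (hsplit j).symm
end

section
/- The integral representation of fractional powers: for positive reals a₁, …, a_k and positive exponents p₁, …, p_k with Σ p_j = 1, one has a₁^{p₁} ⋯ a_k^{p_k} = C⁻¹ ∫_{(0,∞)^{k-1}} (a₁⁻¹ + u₂ a₂⁻¹ + ⋯ + u_k a_k⁻¹)⁻¹ ∏_{j=2}^k u_j^{p_j - 1} du_j, where C = ∏_{j=1}^k Γ(p_j) (equivalently C = ∫ (1 + u₂ + ⋯ + u_k)⁻¹ ∏ u_j^{p_j-1} du_j). -/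
open MeasureTheory Finset

section Auxiliary

open Set Real

lemma aux_exp_lintegral {c : ℝ} (hc : 0 < c) {r : ℝ} (hr : 0 ≤ r) :
    ∫⁻ t in Ioi (0:ℝ), ENNReal.ofReal (Real.exp (-(c * t)) * r) = ENNReal.ofReal (c⁻¹ * r) := by
  rw [← ofReal_integral_eq_lintegral_ofReal]
  · congr 1
    rw [MeasureTheory.integral_mul_const]
    have h1 : ∫ t in Ioi (0:ℝ), Real.exp (-(c * t)) = c⁻¹ := by
      have := Real.integral_rpow_mul_exp_neg_mul_Ioi one_pos hc
      simp only [sub_self, Real.rpow_zero, one_mul, Real.rpow_one, Real.Gamma_one,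
        mul_one, one_div] at this
      exact this
    rw [h1]
  · exact ((exp_neg_integrableOn_Ioi 0 hc).congr_fun (fun t _ => by rw [neg_mul])
      measurableSet_Ioi).mul_const r
  · exact Filter.Eventually.of_forall fun t => mul_nonneg (Real.exp_nonneg _) hr

lemma aux_gamma_lintegral {s c : ℝ} (hs : 0 < s) (hc : 0 < c) :
    ∫⁻ x in Ioi (0:ℝ), ENNReal.ofReal (x ^ (s - 1) * Real.exp (-(c * x)))
      = ENNReal.ofReal ((1 / c) ^ s * Real.Gamma s) := by
  rw [← ofReal_integral_eq_lintegral_ofReal]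
  · rw [Real.integral_rpow_mul_exp_neg_mul_Ioi hs hc]
  · have h := integrableOn_rpow_mul_exp_neg_mul_rpow (s := s - 1) (p := 1)
      (by linarith) one_pos hc
    exact h.congr_fun (fun x hx => by beta_reduce; rw [Real.rpow_one, neg_mul]) measurableSet_Ioi
  · filter_upwards [self_mem_ae_restrict measurableSet_Ioi] with x hx
    exact mul_nonneg (Real.rpow_nonneg (le_of_lt hx) _) (Real.exp_nonneg _)

lemma lintegral_fin_prod {n : ℕ} (g : Fin n → ℝ → ENNReal) (hg : ∀ j, Measurable (g j)) :
    ∫⁻ u : Fin n → ℝ, ∏ j, g j (u j) = ∏ j, ∫⁻ x : ℝ, g j x := by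
  induction n with
  | zero => simp [lintegral_const, volume_pi]
  | succ n n_ih =>
      calc
        _ = ∫⁻ x : ℝ × (Fin n → ℝ), g 0 x.1 * ∏ i : Fin n, g i.succ (x.2 i) := by
          rw [volume_pi, ← ((measurePreserving_piFinSuccAbove
            (fun _ : Fin (n + 1) => (volume : Measure ℝ)) 0).symm).lintegral_comp
            (f := fun u => ∏ j, g j (u j))
            (Finset.measurable_prod _ fun j _ => (hg j).comp (measurable_pi_apply j))]
          congr 1
          funext x
          rw [Fin.prod_univ_succ]
          simp [MeasurableEquiv.piFinSuccAbove_symm_apply, Fin.insertNthEquiv,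
            Fin.insertNth_zero, Fin.zero_succAbove]
        _ = (∫⁻ x : ℝ, g 0 x) * ∏ i : Fin n, ∫⁻ x : ℝ, g i.succ x := by
          rw [← n_ih _ (fun j => hg j.succ), ← lintegral_prod_mul ((hg 0).aemeasurable)
            ((Finset.measurable_prod _ fun j _ =>
              (hg j.succ).comp (measurable_pi_apply j)).aemeasurable)]
          rfl
        _ = ∏ j, ∫⁻ x : ℝ, g j x := by rw [Fin.prod_univ_succ]

lemma lintegral_pi_Ioi_prod {n : ℕ} (g : Fin n → ℝ → ENNReal) (hg : ∀ j, Measurable (g j)) :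
    ∫⁻ u : Fin n → ℝ in Set.univ.pi (fun _ => Ioi (0:ℝ)), ∏ j, g j (u j)
      = ∏ j, ∫⁻ x in Ioi (0:ℝ), g j x := by
  rw [← lintegral_indicator (MeasurableSet.univ_pi fun _ => measurableSet_Ioi)]
  have : ∀ u : Fin n → ℝ, (Set.univ.pi (fun _ => Ioi (0:ℝ))).indicator
      (fun u => ∏ j, g j (u j)) u = ∏ j, (Ioi (0:ℝ)).indicator (g j) (u j) := by
    intro u
    by_cases h : u ∈ Set.univ.pi (fun _ => Ioi (0:ℝ))
    · rw [Set.indicator_of_mem h]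
      exact Finset.prod_congr rfl fun j _ =>
        (Set.indicator_of_mem (h j (Set.mem_univ j)) _).symm
    · rw [Set.indicator_of_notMem h]
      rw [Set.mem_univ_pi, not_forall] at h
      obtain ⟨j, hj⟩ := h
      exact (Finset.prod_eq_zero (Finset.mem_univ j)
        (by rw [Set.indicator_of_notMem hj])).symm
  simp_rw [this]
  rw [lintegral_fin_prod _ (fun j => (hg j).indicator measurableSet_Ioi)]
  simp_rw [lintegral_indicator measurableSet_Ioi]

lemma key_lintegral {n : ℕ} (b q : Fin n → ℝ) (hb : ∀ j, 0 < b j) (hq : ∀ j, 0 < q j)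
    {c s : ℝ} (hc : 0 < c) (hs : 0 < s) (hsq : ∑ j, q j = 1 - s) :
    ∫⁻ u : Fin n → ℝ in Set.univ.pi (fun _ => Ioi (0:ℝ)),
      ENNReal.ofReal ((c + ∑ j, u j * b j)⁻¹ * ∏ j, u j ^ (q j - 1))
    = ENNReal.ofReal ((1 / c) ^ s * Real.Gamma s) *
        ENNReal.ofReal (∏ j, ((1 / b j) ^ q j * Real.Gamma (q j))) := by
  have hSm : MeasurableSet (Set.univ.pi (fun _ : Fin n => Ioi (0:ℝ))) :=
    MeasurableSet.univ_pi fun _ => measurableSet_Ioi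
  -- Step A: replace the integrand by a `t`-integral
  have hA : ∀ᵐ u : Fin n → ℝ, u ∈ Set.univ.pi (fun _ => Ioi (0:ℝ)) →
      ENNReal.ofReal ((c + ∑ j, u j * b j)⁻¹ * ∏ j, u j ^ (q j - 1)) =
      ∫⁻ t in Ioi (0:ℝ), ENNReal.ofReal
        (Real.exp (-((c + ∑ j, u j * b j) * t)) * ∏ j, u j ^ (q j - 1)) := by
    refine Filter.Eventually.of_forall fun u hu => ?_
    have hcs : 0 < c + ∑ j, u j * b j := by
      have : (0:ℝ) ≤ ∑ j, u j * b j := Finset.sum_nonneg fun j _ =>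
        mul_nonneg (le_of_lt (hu j (Set.mem_univ j))) (hb j).le
      linarith
    have hprod : 0 ≤ ∏ j, u j ^ (q j - 1) := Finset.prod_nonneg fun j _ =>
      Real.rpow_nonneg (le_of_lt (hu j (Set.mem_univ j))) _
    rw [aux_exp_lintegral hcs hprod]
  rw [setLIntegral_congr_fun_ae hSm hA]
  -- Step B: swap the integrals
  have hmeas : Measurable (fun z : (Fin n → ℝ) × ℝ =>
      ENNReal.ofReal (Real.exp (-((c + ∑ j, z.1 j * b j) * z.2)) * ∏ j, z.1 j ^ (q j - 1))) := by
    apply ENNReal.measurable_ofReal.comp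
    apply Measurable.mul
    · exact (((measurable_const.add (Finset.measurable_sum _ fun j _ =>
        ((measurable_pi_apply j).comp measurable_fst).mul_const _)).mul
        measurable_snd).neg).exp
    · exact (Finset.measurable_prod _ fun j _ =>
        ((measurable_pi_apply j).comp measurable_fst).pow_const _).comp measurable_id
  rw [lintegral_lintegral_swap hmeas.aemeasurable]
  -- Step C: compute the inner integral for fixed t
  have hC : ∀ᵐ t : ℝ, t ∈ Ioi (0:ℝ) →
      (∫⁻ u : Fin n → ℝ in Set.univ.pi (fun _ => Ioi (0:ℝ)),
        ENNReal.ofReal (Real.exp (-((c + ∑ j, u j * b j) * t)) * ∏ j, u j ^ (q j - 1)))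
      = ENNReal.ofReal (∏ j, ((1 / b j) ^ q j * Real.Gamma (q j))) *
          ENNReal.ofReal (t ^ (s - 1) * Real.exp (-(c * t))) := by
    refine Filter.Eventually.of_forall fun t ht => ?_
    have ht0 : (0:ℝ) < t := ht
    have step1 : ∀ᵐ u : Fin n → ℝ, u ∈ Set.univ.pi (fun _ => Ioi (0:ℝ)) →
        ENNReal.ofReal (Real.exp (-((c + ∑ j, u j * b j) * t)) * ∏ j, u j ^ (q j - 1)) =
        ENNReal.ofReal (Real.exp (-(c * t))) *
          ∏ j, ENNReal.ofReal ((u j) ^ (q j - 1) * Real.exp (-((b j * t) * u j))) := by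
      refine Filter.Eventually.of_forall fun u hu => ?_
      have hexp : Real.exp (-((c + ∑ j, u j * b j) * t)) =
          Real.exp (-(c * t)) * ∏ j, Real.exp (-((b j * t) * u j)) := by
        rw [← Real.exp_sum, ← Real.exp_add]
        congr 1
        rw [add_mul, Finset.sum_mul, neg_add, ← Finset.sum_neg_distrib]
        congr 1
        exact Finset.sum_congr rfl fun j _ => by ring
      rw [hexp, mul_assoc, ← Finset.prod_mul_distrib,
        ENNReal.ofReal_mul (Real.exp_nonneg _), ENNReal.ofReal_prod_of_nonneg]
      · congr 1
        exact Finset.prod_congr rfl fun j _ => by rw [mul_comm]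
      · exact fun j _ => mul_nonneg (Real.exp_nonneg _)
          (Real.rpow_nonneg (le_of_lt (hu j (Set.mem_univ j))) _)
    have hg : ∀ j, Measurable (fun x : ℝ =>
        ENNReal.ofReal (x ^ (q j - 1) * Real.exp (-(b j * t * x)))) := fun j =>
      (((measurable_id.pow_const _).mul ((measurable_id.const_mul _).neg.exp))).ennreal_ofReal
    have hgp : Measurable (fun u : Fin n → ℝ =>
        ∏ j, ENNReal.ofReal (u j ^ (q j - 1) * Real.exp (-(b j * t * u j)))) := by
      apply Finset.measurable_prod
      intro j _
      exact ((((measurable_pi_apply j).pow_const _).mul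
        (((measurable_pi_apply j).const_mul _).neg.exp))).ennreal_ofReal
    rw [setLIntegral_congr_fun_ae hSm step1, lintegral_const_mul _ hgp,
      lintegral_pi_Ioi_prod (fun j x =>
        ENNReal.ofReal (x ^ (q j - 1) * Real.exp (-(b j * t * x)))) hg]
    have each : ∀ j, (∫⁻ x in Ioi (0:ℝ),
        ENNReal.ofReal (x ^ (q j - 1) * Real.exp (-(b j * t * x))))
        = ENNReal.ofReal ((1 / (b j * t)) ^ q j * Real.Gamma (q j)) := fun j => by
      have := aux_gamma_lintegral (hq j) (mul_pos (hb j) ht0)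
      simpa using this
    simp_rw [each]
    have hbt : ∀ j : Fin n, (0:ℝ) ≤ 1 / (b j * t) :=
      fun j => le_of_lt (div_pos one_pos (mul_pos (hb j) ht0))
    rw [← ENNReal.ofReal_prod_of_nonneg (fun j _ => mul_nonneg
      (Real.rpow_nonneg (hbt j) _) (Real.Gamma_nonneg_of_nonneg (hq j).le))]
    rw [← ENNReal.ofReal_mul (Real.exp_nonneg _), ← ENNReal.ofReal_mul (Finset.prod_nonneg
      (fun j (_ : j ∈ Finset.univ) => mul_nonneg
        (Real.rpow_nonneg (le_of_lt (div_pos one_pos (hb j))) (q j))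
        (Real.Gamma_nonneg_of_nonneg (hq j).le)))]
    congr 1
    have expand : ∀ j : Fin n, (1 / (b j * t)) ^ q j * Real.Gamma (q j) =
        ((1 / b j) ^ q j * Real.Gamma (q j)) * (1 / t) ^ q j := by
      intro j
      rw [one_div, mul_inv, Real.mul_rpow (le_of_lt (inv_pos.mpr (hb j)))
        (le_of_lt (inv_pos.mpr ht0))]
      simp only [one_div]; ring
    rw [Finset.prod_congr rfl fun j _ => expand j, Finset.prod_mul_distrib,
      ← Real.rpow_sum_of_pos (div_pos one_pos ht0), hsq]
    have h1t : (1/t : ℝ) ^ (1 - s) = t ^ (s - 1) := by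
      rw [one_div, Real.inv_rpow ht0.le, ← Real.rpow_neg ht0.le, neg_sub]
    rw [h1t]; ring
  have hm : Measurable (fun x : ℝ => ENNReal.ofReal (x ^ (s - 1) * Real.exp (-(c * x)))) :=
    ((measurable_id.pow_const _).mul ((measurable_id.const_mul _).neg.exp)).ennreal_ofReal
  rw [setLIntegral_congr_fun_ae measurableSet_Ioi hC, lintegral_const_mul _ hm,
    aux_gamma_lintegral hs hc, mul_comm]

end Auxiliary

open Set in
/-- Integral representation of products of fractional powers: for positive reals `a₁, …, a_k`
and positive exponents summing to one,
`∏ a_j ^ p_j = C⁻¹ ∫_{(0,∞)^{k-1}} (a₁⁻¹ + Σ_{j≥2} u_j a_j⁻¹)⁻¹ ∏_{j≥2} u_j^{p_j-1} du`,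
with `C = ∏ Γ(p_j)`. -/
theorem fractional_power_integral_representation {m : ℕ} (a p : Fin (m + 1) → ℝ)
    (ha : ∀ j, 0 < a j) (hp : ∀ j, 0 < p j) (hsum : ∑ j, p j = 1) :
    ∏ j, a j ^ p j =
      (∏ j, Real.Gamma (p j))⁻¹ *
        ∫ u : Fin m → ℝ in Set.univ.pi (fun _ => Set.Ioi (0 : ℝ)),
          ((a 0)⁻¹ + ∑ j, u j * (a j.succ)⁻¹)⁻¹ * ∏ j, u j ^ (p j.succ - 1) := by
  have hSm : MeasurableSet (Set.univ.pi (fun _ : Fin m => Set.Ioi (0:ℝ))) :=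
    MeasurableSet.univ_pi fun _ => measurableSet_Ioi
  have hF : Measurable (fun u : Fin m → ℝ =>
      ((a 0)⁻¹ + ∑ j, u j * (a j.succ)⁻¹)⁻¹ * ∏ j, u j ^ (p j.succ - 1)) := by
    apply Measurable.mul
    · exact (measurable_const.add (Finset.measurable_sum _ fun j _ =>
        (measurable_pi_apply j).mul_const _)).inv
    · exact Finset.measurable_prod _ fun j _ => (measurable_pi_apply j).pow_const _
  have hnn : 0 ≤ᵐ[volume.restrict (Set.univ.pi (fun _ : Fin m => Set.Ioi (0:ℝ)))]
      (fun u : Fin m → ℝ =>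
        ((a 0)⁻¹ + ∑ j, u j * (a j.succ)⁻¹)⁻¹ * ∏ j, u j ^ (p j.succ - 1)) := by
    refine (ae_restrict_iff' hSm).mpr (Filter.Eventually.of_forall fun u hu => ?_)
    refine mul_nonneg (inv_nonneg.mpr (add_nonneg (inv_nonneg.mpr (ha 0).le)
      (Finset.sum_nonneg fun j _ => mul_nonneg (le_of_lt (hu j (Set.mem_univ j)))
        (inv_nonneg.mpr (ha j.succ).le)))) ?_
    exact Finset.prod_nonneg fun j _ =>
      Real.rpow_nonneg (le_of_lt (hu j (Set.mem_univ j))) _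
  rw [integral_eq_lintegral_of_nonneg_ae hnn hF.aestronglyMeasurable]
  have hsq : ∑ j : Fin m, p j.succ = 1 - p 0 := by
    rw [Fin.sum_univ_succ] at hsum; linarith
  have key := key_lintegral (fun j => (a j.succ)⁻¹) (fun j => p j.succ)
      (fun j => inv_pos.mpr (ha j.succ)) (fun j => hp j.succ)
      (inv_pos.mpr (ha 0)) (hp 0) hsq
  rw [key]
  have hX : (0:ℝ) ≤ (1 / (a 0)⁻¹) ^ p 0 * Real.Gamma (p 0) := by
    exact mul_nonneg (Real.rpow_nonneg (le_of_lt (one_div_pos.mpr (inv_pos.mpr (ha 0)))) _)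
      (Real.Gamma_nonneg_of_nonneg (hp 0).le)
  have hY : (0:ℝ) ≤ ∏ j : Fin m, ((1 / (a j.succ)⁻¹) ^ p j.succ * Real.Gamma (p j.succ)) :=
    Finset.prod_nonneg fun j _ => mul_nonneg
      (Real.rpow_nonneg (le_of_lt (one_div_pos.mpr (inv_pos.mpr (ha j.succ)))) _)
      (Real.Gamma_nonneg_of_nonneg (hp j.succ).le)
  rw [← ENNReal.ofReal_mul hX, ENNReal.toReal_ofReal (mul_nonneg hX hY)]
  have hΓ : ∀ j, Real.Gamma (p j) ≠ 0 := fun j => (Real.Gamma_pos_of_pos (hp j)).ne'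
  simp only [one_div, inv_inv]
  rw [Fin.prod_univ_succ (fun j => a j ^ p j), Fin.prod_univ_succ (fun j => Real.Gamma (p j)),
    Finset.prod_mul_distrib]
  have hΓs : (∏ j : Fin m, Real.Gamma (p j.succ)) ≠ 0 :=
    Finset.prod_ne_zero_iff.mpr fun j _ => hΓ j.succ
  rw [inv_mul_eq_div, eq_div_iff (mul_ne_zero (hΓ 0) hΓs)]
  ring
end

section
/- Subadditivity of von Neumann entropy: for any density matrix ρ₁₂ on a tensor product H₁ ⊗ H₂ of finite-dimensional Hilbert spaces, S(ρ₁₂) ≤ S(ρ₁) + S(ρ₂), where ρ₁, ρ₂ are the partial traces of ρ₁₂. -/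
open Matrix ComplexOrder Finset

/-- The von Neumann entropy `S(ρ) = -Tr[ρ log ρ]` (with the convention `0 log 0 = 0`). -/
noncomputable def vnEntropy {n : Type*} [Fintype n] [DecidableEq n]
    (ρ : Matrix n n ℂ) : ℝ :=
  -(Matrix.trace (ρ * matFun Real.log ρ)).re

/-- Partial trace over the second tensor factor. -/
noncomputable def ptraceRight {α β : Type*} [Fintype β]
    (ρ : Matrix (α × β) (α × β) ℂ) : Matrix α α ℂ :=
  Matrix.of fun i j => ∑ k, ρ (i, k) (j, k)

/-- Partial trace over the first tensor factor. -/
noncomputable def ptraceLeft {α β : Type*} [Fintype α]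
    (ρ : Matrix (α × β) (α × β) ℂ) : Matrix β β ℂ :=
  Matrix.of fun i j => ∑ k, ρ (k, i) (k, j)

section Aux

lemma ptraceRight_isHermitian {α β : Type*} [Fintype α] [Fintype β]
    {ρ : Matrix (α × β) (α × β) ℂ} (h : ρ.IsHermitian) : (ptraceRight ρ).IsHermitian := by
  ext i j
  simp only [conjTranspose_apply, ptraceRight, of_apply, star_sum]
  exact Finset.sum_congr rfl fun k _ => h.apply (i,k) (j,k)

lemma ptraceLeft_isHermitian {α β : Type*} [Fintype α] [Fintype β]
    {ρ : Matrix (α × β) (α × β) ℂ} (h : ρ.IsHermitian) : (ptraceLeft ρ).IsHermitian := by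
  ext i j
  simp only [conjTranspose_apply, ptraceLeft, of_apply, star_sum]
  exact Finset.sum_congr rfl fun k _ => h.apply (k,i) (k,j)

lemma trace_mul_matFun {k : Type*} [Fintype k] [DecidableEq k] {A : Matrix k k ℂ}
    (hA : A.IsHermitian) (f : ℝ → ℝ) :
    Matrix.trace (A * matFun f A) = ∑ i, ((hA.eigenvalues i : ℂ) * (f (hA.eigenvalues i) : ℂ)) := by
  rw [matFun, dif_pos hA]
  rw [← mul_assoc, ← mul_assoc, Matrix.trace_mul_cycle, ← mul_assoc,
    (show star (hA.eigenvectorUnitary : Matrix _ _ ℂ) * A * (hA.eigenvectorUnitary : Matrix _ _ ℂ) = diagonal (RCLike.ofReal ∘ hA.eigenvalues) from (Unitary.conjStarAlgAut_star_apply (S := ℂ) _ _).symm.trans hA.conjStarAlgAut_star_eigenvectorUnitary), diagonal_mul_diagonal, trace_diagonal]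
  simp [Function.comp]

lemma vnEntropy_eq {k : Type*} [Fintype k] [DecidableEq k] {A : Matrix k k ℂ}
    (hA : A.IsHermitian) :
    vnEntropy A = -∑ i, hA.eigenvalues i * Real.log (hA.eigenvalues i) := by
  rw [vnEntropy, trace_mul_matFun hA]
  norm_cast

lemma sum_eigenvalues_eq_one {k : Type*} [Fintype k] [DecidableEq k] {A : Matrix k k ℂ}
    (hA : A.IsHermitian) (htr : A.trace = 1) : ∑ i, hA.eigenvalues i = 1 := by
  have h : A.trace = ∑ i, (hA.eigenvalues i : ℂ) := by
    conv_lhs => rw [hA.spectral_theorem]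
    rw [Unitary.conjStarAlgAut_apply, Matrix.trace_mul_cycle,
      (Matrix.mem_unitaryGroup_iff'.mp (hA.eigenvectorUnitary).2), one_mul, trace_diagonal]
    simp [Function.comp]
  rw [htr] at h
  exact_mod_cast h.symm

lemma row_sum_normSq {ι : Type*} [Fintype ι] [DecidableEq ι] (C : Matrix ι ι ℂ)
    (h : C * star C = 1) (i : ι) : ∑ j, Complex.normSq (C i j) = 1 := by
  have h2 := congrFun (congrFun h i) i
  simp only [mul_apply, star_eq_conjTranspose, conjTranspose_apply, one_apply_eq,
    Complex.star_def, Complex.mul_conj] at h2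
  exact_mod_cast h2

lemma col_sum_normSq {ι : Type*} [Fintype ι] [DecidableEq ι] (C : Matrix ι ι ℂ)
    (h : star C * C = 1) (j : ι) : ∑ i, Complex.normSq (C i j) = 1 := by
  have h2 := congrFun (congrFun h j) j
  simp only [mul_apply, star_eq_conjTranspose, conjTranspose_apply, one_apply_eq,
    Complex.star_def] at h2
  have : ∀ i, (starRingEnd ℂ) (C i j) * C i j = (Complex.normSq (C i j) : ℂ) := fun i => by
    rw [mul_comm, Complex.mul_conj]
  simp_rw [this] at h2
  exact_mod_cast h2

lemma conj_diag_apply {ι : Type*} [Fintype ι] [DecidableEq ι] (C : Matrix ι ι ℂ) (p : ι → ℝ)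
    (x : ι) :
    (star C * Matrix.diagonal (fun i => (p i : ℂ)) * C) x x
      = ∑ i, ((p i * Complex.normSq (C i x) : ℝ) : ℂ) := by
  simp only [mul_apply, star_eq_conjTranspose, conjTranspose_apply, diagonal_apply,
    Complex.star_def, Finset.sum_mul, ite_mul, zero_mul]
  rw [Finset.sum_comm]
  refine Finset.sum_congr rfl fun i _ => ?_
  rw [Finset.sum_eq_single i (fun b _ hb => by simp [Ne.symm hb]) (by simp)]
  simp only [if_pos rfl]
  push_cast
  rw [← Complex.mul_conj]
  ring

lemma sum_mul_conj {κ : Type*} [Fintype κ] [DecidableEq κ] (W : Matrix κ κ ℂ)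
    (hW : W * star W = 1) (s l : κ) :
    ∑ b, W s b * star (W l b) = if s = l then 1 else 0 := by
  have := congrFun (congrFun hW s) l
  simpa [mul_apply, star_eq_conjTranspose, conjTranspose_apply, one_apply] using this

lemma kron_unitary {m n : ℕ} (V : Matrix (Fin m) (Fin m) ℂ) (W : Matrix (Fin n) (Fin n) ℂ)
    (hV : V * star V = 1) (hW : W * star W = 1) :
    (Matrix.of fun (x y : Fin m × Fin n) => V x.1 y.1 * W x.2 y.2) *
      star (Matrix.of fun (x y : Fin m × Fin n) => V x.1 y.1 * W x.2 y.2) = 1 := by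
  ext ⟨j, l⟩ ⟨k, s⟩
  simp only [mul_apply, star_eq_conjTranspose, conjTranspose_apply, of_apply, star_mul',
    Fintype.sum_prod_type]
  calc ∑ a, ∑ b, V j a * W l b * (star (V k a) * star (W s b))
      = (∑ a, V j a * star (V k a)) * (∑ b, W l b * star (W s b)) := by
        rw [Finset.sum_mul_sum]
        exact Finset.sum_congr rfl fun a _ => Finset.sum_congr rfl fun b _ => by ring
    _ = (if j = k then 1 else 0) * (if l = s then 1 else 0) := by
        rw [sum_mul_conj V hV, sum_mul_conj W hW]
    _ = (1 : Matrix (Fin m × Fin n) (Fin m × Fin n) ℂ) (j, l) (k, s) := by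
        by_cases h1 : j = k <;> by_cases h2 : l = s <;> simp [one_apply, Prod.ext_iff, h1, h2]

lemma ptrace_conj {m n : ℕ} (V : Matrix (Fin m) (Fin m) ℂ) (W : Matrix (Fin n) (Fin n) ℂ)
    (hW : W * star W = 1) (ρ : Matrix (Fin m × Fin n) (Fin m × Fin n) ℂ) (a a' : Fin m) :
    ∑ b, ((star (Matrix.of fun (x y : Fin m × Fin n) => V x.1 y.1 * W x.2 y.2)) * ρ *
      (Matrix.of fun (x y : Fin m × Fin n) => V x.1 y.1 * W x.2 y.2)) (a,b) (a',b)
      = (star V * ptraceRight ρ * V) a a' := by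
  simp only [star_eq_conjTranspose, mul_apply, conjTranspose_apply, of_apply, star_mul',
    ptraceRight, Finset.sum_mul, Finset.mul_sum]
  rw [Finset.sum_comm]
  calc ∑ z : Fin m × Fin n, ∑ b : Fin n, ∑ w : Fin m × Fin n,
        star (V w.1 a) * star (W w.2 b) * ρ w z * (V z.1 a' * W z.2 b)
      = ∑ z : Fin m × Fin n, ∑ w : Fin m × Fin n,
        (star (V w.1 a) * ρ w z * V z.1 a') * ∑ b, W z.2 b * star (W w.2 b) := by
        refine Finset.sum_congr rfl fun z _ => ?_
        rw [Finset.sum_comm]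
        refine Finset.sum_congr rfl fun w _ => ?_
        rw [Finset.mul_sum]
        exact Finset.sum_congr rfl fun b _ => by ring
    _ = ∑ z : Fin m × Fin n, ∑ w : Fin m × Fin n,
        (star (V w.1 a) * ρ w z * V z.1 a') * (if z.2 = w.2 then 1 else 0) := by
        simp_rw [sum_mul_conj W hW]
    _ = ∑ x : Fin m, ∑ x_1 : Fin m, ∑ i : Fin n, star (V x_1 a) * ρ (x_1, i) (x, i) * V x a' := by
        simp only [Fintype.sum_prod_type, mul_ite, mul_one, mul_zero, Finset.sum_ite_eq,
          Finset.mem_univ, if_true]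
        exact Finset.sum_congr rfl fun k _ => Finset.sum_comm

lemma ptrace_conj_left {m n : ℕ} (V : Matrix (Fin m) (Fin m) ℂ) (W : Matrix (Fin n) (Fin n) ℂ)
    (hV : V * star V = 1) (ρ : Matrix (Fin m × Fin n) (Fin m × Fin n) ℂ) (b b' : Fin n) :
    ∑ a, ((star (Matrix.of fun (x y : Fin m × Fin n) => V x.1 y.1 * W x.2 y.2)) * ρ *
      (Matrix.of fun (x y : Fin m × Fin n) => V x.1 y.1 * W x.2 y.2)) (a, b) (a, b')
      = (star W * ptraceLeft ρ * W) b b' := by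
  simp only [star_eq_conjTranspose, mul_apply, conjTranspose_apply, of_apply, star_mul',
    ptraceLeft, Finset.sum_mul, Finset.mul_sum]
  calc ∑ a : Fin m, ∑ z : Fin m × Fin n, ∑ w : Fin m × Fin n,
        star (V w.1 a) * star (W w.2 b) * ρ w z * (V z.1 a * W z.2 b')
      = ∑ z : Fin m × Fin n, ∑ w : Fin m × Fin n,
        (star (W w.2 b) * ρ w z * W z.2 b') * ∑ a, V z.1 a * star (V w.1 a) := by
        rw [Finset.sum_comm]
        refine Finset.sum_congr rfl fun z _ => ?_
        rw [Finset.sum_comm]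
        refine Finset.sum_congr rfl fun w _ => ?_
        rw [Finset.mul_sum]
        exact Finset.sum_congr rfl fun a _ => by ring
    _ = ∑ z : Fin m × Fin n, ∑ w : Fin m × Fin n,
        (star (W w.2 b) * ρ w z * W z.2 b') * (if z.1 = w.1 then 1 else 0) := by
        simp_rw [sum_mul_conj V hV]
    _ = ∑ z : Fin m × Fin n, ∑ l : Fin n, ∑ j : Fin m,
        (star (W l b) * ρ (j, l) z * W z.2 b') * (if z.1 = j then 1 else 0) := by
        refine Finset.sum_congr rfl fun z _ => ?_
        rw [Fintype.sum_prod_type]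
        exact Finset.sum_comm
    _ = ∑ z : Fin m × Fin n, ∑ l : Fin n, star (W l b) * ρ (z.1, l) z * W z.2 b' := by
        refine Finset.sum_congr rfl fun z _ => Finset.sum_congr rfl fun l _ => ?_
        simp [mul_ite]
    _ = ∑ x : Fin n, ∑ x_1 : Fin n, ∑ i : Fin m, star (W x_1 b) * ρ (i, x_1) (i, x) * W x b' := by
        rw [Fintype.sum_prod_type, Finset.sum_comm]
        refine Finset.sum_congr rfl fun s _ => ?_
        rw [Finset.sum_comm]

lemma per_term (p c q r : ℝ) (hp : 0 ≤ p) (hc : 0 ≤ c) (hq0 : 0 ≤ q) (hr0 : 0 ≤ r)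
    (hq : 0 < p * c → 0 < q) (hr : 0 < p * c → 0 < r) :
    p * c * (Real.log q + Real.log r) ≤ c * (q * r) - c * p + c * (p * Real.log p) := by
  rcases eq_or_lt_of_le (mul_nonneg hp hc) with h0 | hpos
  · rcases mul_eq_zero.mp h0.symm with hp0 | hc0
    · subst hp0
      simp only [zero_mul, mul_zero, Real.log_zero, sub_zero, add_zero]
      positivity
    · subst hc0; simp
  · obtain ⟨hp', hc'⟩ := (mul_pos_iff.mp hpos).resolve_right (fun h => absurd h.1 (not_lt.mpr hp))
    have hq' := hq hpos
    have hr' := hr hpos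
    have key := Real.log_le_sub_one_of_pos (show (0:ℝ) < q * r / p by positivity)
    rw [Real.log_div (by positivity) hp'.ne', Real.log_mul hq'.ne' hr'.ne'] at key
    have h2 := mul_le_mul_of_nonneg_left key hp'.le
    have hdiv : p * (q * r / p) = q * r := by field_simp
    have h3 : p * (Real.log q + Real.log r) - p * Real.log p ≤ q * r - p := by
      nlinarith [h2, hdiv]
    nlinarith [mul_le_mul_of_nonneg_left h3 hc]

lemma final_sum_ineq {ι₁ ι₂ ι : Type*} [Fintype ι₁] [Fintype ι₂] [Fintype ι]
    (p : ι → ℝ) (c : ι → ι₁ × ι₂ → ℝ) (q : ι₁ → ℝ) (r : ι₂ → ℝ)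
    (hp : ∀ i, 0 ≤ p i) (hc : ∀ i j, 0 ≤ c i j)
    (hrow : ∀ i, ∑ j, c i j = 1) (hcol : ∀ j, ∑ i, c i j = 1)
    (hps : ∑ i, p i = 1)
    (hq : ∀ a, q a = ∑ b, ∑ i, p i * c i (a, b))
    (hr : ∀ b, r b = ∑ a, ∑ i, p i * c i (a, b)) :
    ∑ a, q a * Real.log (q a) + ∑ b, r b * Real.log (r b) ≤ ∑ i, p i * Real.log (p i) := by
  have hq0 : ∀ a, 0 ≤ q a := fun a => by
    rw [hq a]; exact Finset.sum_nonneg fun b _ => Finset.sum_nonneg fun i _ =>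
      mul_nonneg (hp i) (hc i (a, b))
  have hr0 : ∀ b, 0 ≤ r b := fun b => by
    rw [hr b]; exact Finset.sum_nonneg fun a _ => Finset.sum_nonneg fun i _ =>
      mul_nonneg (hp i) (hc i (a, b))
  have hleq : ∀ a b i, p i * c i (a, b) ≤ q a := by
    intro a b i
    rw [hq a]
    calc p i * c i (a, b) ≤ ∑ i', p i' * c i' (a, b) :=
          Finset.single_le_sum (fun i' _ => mul_nonneg (hp i') (hc i' (a, b))) (mem_univ i)
      _ ≤ ∑ b', ∑ i', p i' * c i' (a, b') :=
          Finset.single_le_sum (f := fun b' => ∑ i', p i' * c i' (a, b'))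
            (fun b' _ => Finset.sum_nonneg fun i' _ => mul_nonneg (hp i') (hc i' (a, b')))
            (mem_univ b)
  have hleqr : ∀ a b i, p i * c i (a, b) ≤ r b := by
    intro a b i
    rw [hr b]
    calc p i * c i (a, b) ≤ ∑ i', p i' * c i' (a, b) :=
          Finset.single_le_sum (fun i' _ => mul_nonneg (hp i') (hc i' (a, b))) (mem_univ i)
      _ ≤ ∑ a', ∑ i', p i' * c i' (a', b) :=
          Finset.single_le_sum (f := fun a' => ∑ i', p i' * c i' (a', b))
            (fun a' _ => Finset.sum_nonneg fun i' _ => mul_nonneg (hp i') (hc i' (a', b)))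
            (mem_univ a)
  have e1 : ∑ a, q a * Real.log (q a)
      = ∑ a, ∑ b, ∑ i, p i * c i (a, b) * Real.log (q a) := by
    refine Finset.sum_congr rfl fun a _ => ?_
    have : ∑ b, ∑ i, p i * c i (a, b) * Real.log (q a)
        = (∑ b, ∑ i, p i * c i (a, b)) * Real.log (q a) := by
      rw [Finset.sum_mul]
      exact Finset.sum_congr rfl fun b _ => (Finset.sum_mul _ _ _).symm
    rw [this, ← hq a]
  have e2 : ∑ b, r b * Real.log (r b)
      = ∑ a, ∑ b, ∑ i, p i * c i (a, b) * Real.log (r b) := by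
    rw [Finset.sum_comm]
    refine Finset.sum_congr rfl fun b _ => ?_
    have : ∑ a, ∑ i, p i * c i (a, b) * Real.log (r b)
        = (∑ a, ∑ i, p i * c i (a, b)) * Real.log (r b) := by
      rw [Finset.sum_mul]
      exact Finset.sum_congr rfl fun a _ => (Finset.sum_mul _ _ _).symm
    rw [this, ← hr b]
  rw [e1, e2, ← Finset.sum_add_distrib]
  simp only [← Finset.sum_add_distrib, ← mul_add]
  have step : ∑ a, ∑ b, ∑ i, p i * c i (a, b) * (Real.log (q a) + Real.log (r b))
      ≤ ∑ a, ∑ b, ∑ i, (c i (a, b) * (q a * r b) - c i (a, b) * p i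
          + c i (a, b) * (p i * Real.log (p i))) := by
    refine Finset.sum_le_sum fun a _ => Finset.sum_le_sum fun b _ => Finset.sum_le_sum fun i _ => ?_
    exact per_term (p i) (c i (a, b)) (q a) (r b) (hp i) (hc i (a, b)) (hq0 a) (hr0 b)
      (fun h => lt_of_lt_of_le h (hleq a b i)) (fun h => lt_of_lt_of_le h (hleqr a b i))
  refine le_trans step (le_of_eq ?_)
  have hsq : ∑ a, q a = 1 := by
    simp_rw [hq]
    rw [Finset.sum_comm]
    calc ∑ b, ∑ a, ∑ i, p i * c i (a, b)
        = ∑ b, ∑ i, ∑ a, p i * c i (a, b) :=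
          Finset.sum_congr rfl fun b _ => Finset.sum_comm
      _ = ∑ i, ∑ b, ∑ a, p i * c i (a, b) := Finset.sum_comm
      _ = ∑ i, p i * ∑ j, c i j := by
          refine Finset.sum_congr rfl fun i _ => ?_
          simp_rw [Fintype.sum_prod_type, Finset.mul_sum]
          exact Finset.sum_comm
      _ = 1 := by simp_rw [hrow]; simpa using hps
  have hsr : ∑ b, r b = 1 := by
    simp_rw [hr]
    calc ∑ b, ∑ a, ∑ i, p i * c i (a, b)
        = ∑ b, ∑ i, ∑ a, p i * c i (a, b) :=
          Finset.sum_congr rfl fun b _ => Finset.sum_comm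
      _ = ∑ i, ∑ b, ∑ a, p i * c i (a, b) := Finset.sum_comm
      _ = ∑ i, p i * ∑ j, c i j := by
          refine Finset.sum_congr rfl fun i _ => ?_
          simp_rw [Fintype.sum_prod_type, Finset.mul_sum]
          exact Finset.sum_comm
      _ = 1 := by simp_rw [hrow]; simpa using hps
  have t1 : ∑ a, ∑ b, ∑ i, c i (a, b) * (q a * r b) = 1 := by
    calc ∑ a, ∑ b, ∑ i, c i (a, b) * (q a * r b)
        = ∑ a, ∑ b, (q a * r b) := by
          refine Finset.sum_congr rfl fun a _ => Finset.sum_congr rfl fun b _ => ?_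
          rw [← Finset.sum_mul, hcol (a, b), one_mul]
      _ = (∑ a, q a) * (∑ b, r b) := by rw [Finset.sum_mul_sum]
      _ = 1 := by rw [hsq, hsr, one_mul]
  have t2 : ∀ (f : ι → ℝ), ∑ a, ∑ b, ∑ i, c i (a, b) * f i = ∑ i, f i := by
    intro f
    calc ∑ a, ∑ b, ∑ i, c i (a, b) * f i
        = ∑ a, ∑ i, ∑ b, c i (a, b) * f i :=
          Finset.sum_congr rfl fun a _ => Finset.sum_comm
      _ = ∑ i, ∑ a, ∑ b, c i (a, b) * f i := Finset.sum_comm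
      _ = ∑ i, (∑ j, c i j) * f i := by
          refine Finset.sum_congr rfl fun i _ => ?_
          simp_rw [Fintype.sum_prod_type, Finset.sum_mul]
      _ = ∑ i, f i := by simp_rw [hrow, one_mul]
  calc ∑ a, ∑ b, ∑ i, (c i (a, b) * (q a * r b) - c i (a, b) * p i
          + c i (a, b) * (p i * Real.log (p i)))
      = ∑ a, ∑ b, ∑ i, c i (a, b) * (q a * r b)
        - ∑ a, ∑ b, ∑ i, c i (a, b) * p i
        + ∑ a, ∑ b, ∑ i, c i (a, b) * (p i * Real.log (p i)) := by
        simp only [Finset.sum_add_distrib, Finset.sum_sub_distrib]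
    _ = 1 - 1 + ∑ i, p i * Real.log (p i) := by
        rw [t1, t2 p, t2 (fun i => p i * Real.log (p i)), hps]
    _ = ∑ i, p i * Real.log (p i) := by ring

end Aux

/-- Subadditivity of von Neumann entropy: `S(ρ₁₂) ≤ S(ρ₁) + S(ρ₂)` for any density matrix
`ρ₁₂` on a tensor product of finite-dimensional Hilbert spaces. -/
theorem entropy_subadditive {m n : ℕ}
    (ρ : Matrix (Fin m × Fin n) (Fin m × Fin n) ℂ)
    (hρ : ρ.PosSemidef) (htr : ρ.trace = 1) :
    vnEntropy ρ ≤ vnEntropy (ptraceRight ρ) + vnEntropy (ptraceLeft ρ) := by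
  classical
  have hH : ρ.IsHermitian := hρ.1
  have h1 : (ptraceRight ρ).IsHermitian := ptraceRight_isHermitian hH
  have h2 : (ptraceLeft ρ).IsHermitian := ptraceLeft_isHermitian hH
  set p : Fin m × Fin n → ℝ := hH.eigenvalues with hp_def
  set q : Fin m → ℝ := h1.eigenvalues with hq_def
  set r : Fin n → ℝ := h2.eigenvalues with hr_def
  set U : Matrix (Fin m × Fin n) (Fin m × Fin n) ℂ :=
    (hH.eigenvectorUnitary : Matrix (Fin m × Fin n) (Fin m × Fin n) ℂ) with hU_def
  set V : Matrix (Fin m) (Fin m) ℂ := (h1.eigenvectorUnitary : Matrix (Fin m) (Fin m) ℂ) with hV_def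
  set W : Matrix (Fin n) (Fin n) ℂ := (h2.eigenvectorUnitary : Matrix (Fin n) (Fin n) ℂ) with hW_def
  have hUu' : star U * U = 1 := Matrix.mem_unitaryGroup_iff'.mp (hH.eigenvectorUnitary).2
  have hVu : V * star V = 1 := Matrix.mem_unitaryGroup_iff.mp (h1.eigenvectorUnitary).2
  have hWu : W * star W = 1 := Matrix.mem_unitaryGroup_iff.mp (h2.eigenvectorUnitary).2
  set T : Matrix (Fin m × Fin n) (Fin m × Fin n) ℂ :=
    Matrix.of fun (x y : Fin m × Fin n) => V x.1 y.1 * W x.2 y.2 with hT_def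
  have hTu : T * star T = 1 := kron_unitary V W hVu hWu
  set C : Matrix (Fin m × Fin n) (Fin m × Fin n) ℂ := star U * T with hC_def
  have hstarC : star C = star T * U := by rw [hC_def, StarMul.star_mul, star_star]
  have hCu : C * star C = 1 := by
    rw [hstarC, hC_def, mul_assoc, ← mul_assoc T, hTu, one_mul, hUu']
  have hCu' : star C * C = 1 := mul_eq_one_comm.mp hCu
  set c : (Fin m × Fin n) → (Fin m × Fin n) → ℝ := fun i j => Complex.normSq (C i j) with hc_def
  have hXC : star T * ρ * T = star C * Matrix.diagonal (fun i => ((p i : ℝ) : ℂ)) * C := by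
    conv_lhs => rw [hH.spectral_theorem]
    rw [hstarC, hC_def]
    have hdg : Matrix.diagonal (RCLike.ofReal ∘ hH.eigenvalues)
        = Matrix.diagonal (fun i => ((p i : ℝ) : ℂ)) := rfl
    rw [hdg]
    simp only [mul_assoc, Unitary.conjStarAlgAut_apply]; rfl
  have hentry : ∀ x, (star T * ρ * T) x x = ∑ i, ((p i * c i x : ℝ) : ℂ) := by
    intro x; rw [hXC]; exact conj_diag_apply C p x
  have hqC : ∀ a, q a = ∑ b, ∑ i, p i * c i (a, b) := by
    intro a
    have hd := congrFun (congrFun (show star (h1.eigenvectorUnitary : Matrix _ _ ℂ) * ptraceRight ρ * (h1.eigenvectorUnitary : Matrix _ _ ℂ) = diagonal (RCLike.ofReal ∘ h1.eigenvalues) from (Unitary.conjStarAlgAut_star_apply (S := ℂ) _ _).symm.trans h1.conjStarAlgAut_star_eigenvectorUnitary) a) a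
    have hp1 := ptrace_conj V W hWu ρ a a
    rw [← hT_def] at hp1
    have hcx : ((q a : ℝ) : ℂ) = ∑ b, ∑ i, ((p i * c i (a, b) : ℝ) : ℂ) := by
      calc ((q a : ℝ) : ℂ) = (star V * ptraceRight ρ * V) a a := by
            rw [hd]; simp [Function.comp]; rfl
        _ = ∑ b, (star T * ρ * T) (a, b) (a, b) := hp1.symm
        _ = ∑ b, ∑ i, ((p i * c i (a, b) : ℝ) : ℂ) :=
            Finset.sum_congr rfl fun b _ => hentry (a, b)
    exact_mod_cast hcx
  have hrC : ∀ b, r b = ∑ a, ∑ i, p i * c i (a, b) := by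
    intro b
    have hd := congrFun (congrFun (show star (h2.eigenvectorUnitary : Matrix _ _ ℂ) * ptraceLeft ρ * (h2.eigenvectorUnitary : Matrix _ _ ℂ) = diagonal (RCLike.ofReal ∘ h2.eigenvalues) from (Unitary.conjStarAlgAut_star_apply (S := ℂ) _ _).symm.trans h2.conjStarAlgAut_star_eigenvectorUnitary) b) b
    have hp1 := ptrace_conj_left V W hVu ρ b b
    rw [← hT_def] at hp1
    have hcx : ((r b : ℝ) : ℂ) = ∑ a, ∑ i, ((p i * c i (a, b) : ℝ) : ℂ) := by
      calc ((r b : ℝ) : ℂ) = (star W * ptraceLeft ρ * W) b b := by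
            rw [hd]; simp [Function.comp]; rfl
        _ = ∑ a, (star T * ρ * T) (a, b) (a, b) := hp1.symm
        _ = ∑ a, ∑ i, ((p i * c i (a, b) : ℝ) : ℂ) :=
            Finset.sum_congr rfl fun a _ => hentry (a, b)
    exact_mod_cast hcx
  have hp0 : ∀ i, 0 ≤ p i := fun i => hρ.eigenvalues_nonneg i
  have hc0 : ∀ i j, 0 ≤ c i j := fun i j => Complex.normSq_nonneg _
  have hcrow : ∀ i, ∑ j, c i j = 1 := fun i => row_sum_normSq C hCu i
  have hccol : ∀ j, ∑ i, c i j = 1 := fun j => col_sum_normSq C hCu' j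
  have hps : ∑ i, p i = 1 := sum_eigenvalues_eq_one hH htr
  have main := final_sum_ineq p c q r hp0 hc0 hcrow hccol hps hqC hrC
  rw [vnEntropy_eq hH, vnEntropy_eq h1, vnEntropy_eq h2]
  linarith
end
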